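/- arXiv:2107.01395 — 5 statements merged into one kernel-verified Lean document; each statement's English description precedes it below -/
import Mathlib

section
/- For every integer m ≥ 2, the greatest common divisor of the binomial coefficients C(m+1,1), C(m+1,2), …, C(m+1,m-1) equals p if m+1 is a power of a prime p, and equals 1 otherwise. -/
open Finset Nat

lemma mod_zero_of_dvd' {a b : ℕ} (hb : 0 < b) (h : b ∣ a) : a % b = 0 :=
  Nat.eq_zero_of_dvd_of_lt ((Nat.dvd_mod_iff dvd_rfl).2 h) (Nat.mod_lt _ hb)

/-- No carries when adding `p ^ a` and `n - p ^ a` in base `p`, where `a = ν_p(n)`. -/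
lemma no_carry_aux {p n i : ℕ} (hp : p.Prime) (hn : n ≠ 0) :
    p ^ (n.factorization p) % p ^ i + (n - p ^ (n.factorization p)) % p ^ i < p ^ i := by
  set a := n.factorization p with ha
  have hpi : 0 < p ^ i := pow_pos hp.pos i
  have hdvdn : p ^ a ∣ n := Nat.ordProj_dvd n p
  rcases le_or_gt i a with h | h
  · have h1 : p ^ a % p ^ i = 0 := mod_zero_of_dvd' hpi (pow_dvd_pow p h)
    have h2 : (n - p ^ a) % p ^ i = 0 :=
      mod_zero_of_dvd' hpi (Nat.dvd_sub ((pow_dvd_pow p h).trans hdvdn) (pow_dvd_pow p h))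
    omega
  · have hlt : p ^ a < p ^ i := Nat.pow_lt_pow_right hp.one_lt h
    have h1 : p ^ a % p ^ i = p ^ a := Nat.mod_eq_of_lt hlt
    set c := n % p ^ i with hc
    have hclt : c < p ^ i := Nat.mod_lt _ hpi
    have hdc : p ^ a ∣ c := by
      rw [hc, Nat.dvd_mod_iff (pow_dvd_pow p h.le)]
      exact hdvdn
    have hcne : c ≠ 0 := by
      intro h0
      have h5 : p ^ i ∣ n := Nat.dvd_of_mod_eq_zero h0
      exact Nat.pow_succ_factorization_not_dvd hn hp ((pow_dvd_pow p h).trans h5)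
    have hac : p ^ a ≤ c := Nat.le_of_dvd (Nat.pos_of_ne_zero hcne) hdc
    have hdm : p ^ i * (n / p ^ i) + c = n := Nat.div_add_mod n (p ^ i)
    have h2 : n - p ^ a = p ^ i * (n / p ^ i) + (c - p ^ a) := by omega
    have h3 : (n - p ^ a) % p ^ i = c - p ^ a := by
      rw [h2, Nat.mul_add_mod, Nat.mod_eq_of_lt (by omega)]
    omega

/-- If `p` is prime dividing `n` and `n` is not a power of `p`, then `p` does not divide
`n.choose (p ^ ν_p(n))`. -/
lemma not_dvd_choose_ordProj {p n : ℕ} (hp : p.Prime) (hn : n ≠ 0) :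
    ¬ p ∣ n.choose (p ^ (n.factorization p)) := by
  have hkn : p ^ (n.factorization p) ≤ n := Nat.le_of_dvd (Nat.pos_of_ne_zero hn)
    (Nat.ordProj_dvd n p)
  have hb : Nat.log p n < Nat.log p n + 1 := lt_succ_self _
  have he := hp.emultiplicity_choose hkn hb
  have hzero : {i ∈ Ico 1 (Nat.log p n + 1) |
      p ^ i ≤ p ^ (n.factorization p) % p ^ i + (n - p ^ (n.factorization p)) % p ^ i} = ∅ := by
    refine Finset.filter_eq_empty_iff.2 fun i _ => ?_
    exact not_le.2 (no_carry_aux hp hn)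
  rw [hzero] at he
  simp only [Finset.card_empty, Nat.cast_zero] at he
  intro hdvd
  have := pow_dvd_iff_le_emultiplicity.1 (by simpa using hdvd : p ^ 1 ∣ _)
  rw [he] at this
  exact absurd this (by simp)

/-- For every integer `m ≥ 2`, the gcd of the binomial coefficients
`C(m+1,1), …, C(m+1,m-1)` equals `p` if `m+1` is a power of a prime `p`,
and equals `1` otherwise. -/
theorem stmt_0 (m : ℕ) (hm : 2 ≤ m) :
    (∀ p s : ℕ, p.Prime → 0 < s → m + 1 = p ^ s →
      (Finset.Icc 1 (m - 1)).gcd (fun i => (m + 1).choose i) = p) ∧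
    ((¬ ∃ p s : ℕ, p.Prime ∧ 0 < s ∧ m + 1 = p ^ s) →
      (Finset.Icc 1 (m - 1)).gcd (fun i => (m + 1).choose i) = 1) := by
  have h1mem : 1 ∈ Finset.Icc 1 (m - 1) := Finset.mem_Icc.2 ⟨le_refl 1, by omega⟩
  have hgdvd : (Finset.Icc 1 (m - 1)).gcd (fun i => (m + 1).choose i) ∣ m + 1 := by
    have := Finset.gcd_dvd (f := fun i => (m + 1).choose i) h1mem
    simpa using this
  constructor
  · intro p s hp hs hpow
    set G := (Finset.Icc 1 (m - 1)).gcd (fun i => (m + 1).choose i) with hG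
    -- p divides G
    have hpG : p ∣ G := by
      refine Finset.dvd_gcd fun i hi => ?_
      rw [Finset.mem_Icc] at hi
      rw [hpow]
      exact Nat.Prime.dvd_choose_pow hp (by omega) (by omega)
    -- k = p^(s-1) is in range
    have hk1 : 1 ≤ p ^ (s - 1) := Nat.one_le_pow _ _ hp.pos
    have hps : p ^ s = p * p ^ (s - 1) := by
      conv_lhs => rw [show s = (s - 1) + 1 by omega]
      ring
    have hklt : p ^ (s - 1) + 2 ≤ p ^ s := by
      rcases le_or_gt 2 (p ^ (s - 1)) with h | h
      · nlinarith [hp.two_le]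
      · have h1 : p ^ (s - 1) = 1 := by omega
        rw [h1, mul_one] at hps
        have := hp.two_le
        omega
    have hkmem : p ^ (s - 1) ∈ Finset.Icc 1 (m - 1) := Finset.mem_Icc.2 ⟨hk1, by omega⟩
    have hGk : G ∣ (m + 1).choose (p ^ (s - 1)) := Finset.gcd_dvd hkmem
    -- valuation of the choose is exactly 1
    have hval : emultiplicity p ((p ^ s).choose (p ^ (s - 1))) = (1 : ℕ) := by
      rw [hp.emultiplicity_choose_prime_pow (pow_le_pow_right₀ hp.one_le (by omega))
        (by positivity)]
      congr 1
      rw [multiplicity_pow_self_of_prime hp.prime]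
      omega
    -- G divides p^s, so G = p^t
    rw [hpow] at hgdvd
    obtain ⟨t, hts, hGt⟩ := (Nat.dvd_prime_pow hp).1 hgdvd
    have ht1 : 1 ≤ t := by
      rcases Nat.eq_zero_or_pos t with h0 | h0
      · rw [hGt, h0, pow_zero] at hpG
        exact absurd (Nat.le_of_dvd one_pos hpG) (by have := hp.two_le; omega)
      · exact h0
    have ht2 : t ≤ 1 := by
      have hdd : p ^ t ∣ (p ^ s).choose (p ^ (s - 1)) := by rw [← hGt, ← hpow]; exact hGk
      have := pow_dvd_iff_le_emultiplicity.1 hdd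
      rw [hval] at this
      exact_mod_cast this
    rw [hGt]; rw [show t = 1 by omega, pow_one]
  · intro hnp
    set G := (Finset.Icc 1 (m - 1)).gcd (fun i => (m + 1).choose i) with hG
    by_contra hne
    have hGne0 : G ≠ 0 := fun h0 => by rw [h0] at hgdvd; omega
    obtain ⟨p, hp, hpG⟩ := Nat.exists_prime_and_dvd hne
    have hpn : p ∣ m + 1 := hpG.trans hgdvd
    set a := (m + 1).factorization p with ha
    have hn0 : m + 1 ≠ 0 := by omega
    have ha1 : 1 ≤ a := (Nat.Prime.dvd_iff_one_le_factorization hp hn0).1 hpn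
    have hdvdn : p ^ a ∣ m + 1 := Nat.ordProj_dvd _ p
    have hane : p ^ a ≠ m + 1 := by
      intro h
      exact hnp ⟨p, a, hp, ha1, h.symm⟩
    have hpa2 : 2 ≤ p ^ a :=
      le_trans hp.two_le (Nat.le_self_pow (by omega) p)
    have hkle : p ^ a ≤ m - 1 := by
      obtain ⟨b, hb⟩ := hdvdn
      have hb2 : 2 ≤ b := by
        rcases b with _ | _ | b
        · omega
        · simp at hb; exact absurd hb.symm hane
        · omega
      have h6 : p ^ a * 2 ≤ p ^ a * b := Nat.mul_le_mul le_rfl hb2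
      rw [← hb] at h6
      omega
    have hkmem : p ^ a ∈ Finset.Icc 1 (m - 1) := Finset.mem_Icc.2 ⟨by omega, hkle⟩
    have hGk : G ∣ (m + 1).choose (p ^ a) := Finset.gcd_dvd hkmem
    exact not_dvd_choose_ordProj hp hn0 (hpG.trans hGk)
end

section
/- If m+1 is not a prime power (i.e., m+1 has at least two distinct prime factors), then the greatest common divisor of C(m+1,1), …, C(m+1,m) equals 1. -/
lemma aux_not_dvd_choose {p : ℕ} (hp : p.Prime) (s : ℕ) (hs : ¬ p ∣ s) :
    ∀ a : ℕ, ¬ p ∣ (p ^ a * s).choose (p ^ a) := by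
  haveI : Fact p.Prime := ⟨hp⟩
  intro a
  induction a with
  | zero => simpa using hs
  | succ a ih =>
    have hn : p ^ (a + 1) * s = p * (p ^ a * s) := by ring
    have hk : p ^ (a + 1) = p * p ^ a := by ring
    have h := @Choose.choose_modEq_choose_mod_mul_choose_div_nat
      (p ^ (a + 1) * s) (p ^ (a + 1)) p ⟨hp⟩
    rw [hn, hk, Nat.mul_mod_right, Nat.mul_mod_right,
      Nat.mul_div_cancel_left _ hp.pos, Nat.mul_div_cancel_left _ hp.pos,
      Nat.choose_self, one_mul] at h
    intro hdvd
    apply ih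
    rw [← Nat.modEq_zero_iff_dvd] at hdvd ⊢
    rw [hn, hk] at hdvd
    exact h.symm.trans hdvd

/-- If `m + 1` has at least two distinct prime factors, then the gcd of
`C(m+1,1), …, C(m+1,m)` equals `1`. -/
theorem stmt_2 (m : ℕ) (hm : 2 ≤ m)
    (h : ∃ p q : ℕ, p.Prime ∧ q.Prime ∧ p ≠ q ∧ p ∣ (m + 1) ∧ q ∣ (m + 1)) :
    (Finset.Icc 1 m).gcd (fun i => (m + 1).choose i) = 1 := by
  obtain ⟨p, q, hp, hq, hpq, hpd, hqd⟩ := h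
  set d := (Finset.Icc 1 m).gcd (fun i => (m + 1).choose i) with hd
  by_contra hne
  -- get a prime r dividing d
  obtain ⟨r, hr, hrd⟩ := Nat.exists_prime_and_dvd hne
  have hn0 : m + 1 ≠ 0 := by omega
  set a := (m + 1).factorization r with ha
  set s := (m + 1) / r ^ a with hsdef
  have hns : m + 1 = r ^ a * s := (Nat.ordProj_mul_ordCompl_eq_self (m + 1) r).symm
  have hrs : ¬ r ∣ s := Nat.not_dvd_ordCompl hr hn0
  -- s ≥ 2: some prime ≠ r divides m+1, hence divides s
  have hs2 : 2 ≤ s := by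
    rcases eq_or_ne p r with rfl | hpr
    · -- then q ≠ r divides m+1
      have hqs : q ∣ s := Nat.Coprime.dvd_of_dvd_mul_left
          (Nat.Coprime.pow_right a ((Nat.coprime_primes hq hp).mpr hpq.symm)) (hns ▸ hqd)
      have hspos : 0 < s := by
        rcases Nat.eq_zero_or_pos s with h0 | h0
        · rw [h0, mul_zero] at hns; omega
        · exact h0
      exact le_trans hq.two_le (Nat.le_of_dvd hspos hqs)
    · have hps : p ∣ s := by
        exact Nat.Coprime.dvd_of_dvd_mul_left
          (Nat.Coprime.pow_right a ((Nat.coprime_primes hp hr).mpr hpr)) (hns ▸ hpd)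
      have hspos : 0 < s := by
        rcases Nat.eq_zero_or_pos s with h0 | h0
        · rw [h0, mul_zero] at hns; omega
        · exact h0
      exact le_trans hp.two_le (Nat.le_of_dvd hspos hps)
  -- r^a ∈ [1, m]
  have hk1 : 1 ≤ r ^ a := Nat.one_le_pow _ _ hr.pos
  have hkm : r ^ a ≤ m := by
    have : r ^ a * 2 ≤ r ^ a * s := Nat.mul_le_mul_left _ hs2
    omega
  have hmem : r ^ a ∈ Finset.Icc 1 m := Finset.mem_Icc.mpr ⟨hk1, hkm⟩
  have hdvd : d ∣ (m + 1).choose (r ^ a) := Finset.gcd_dvd hmem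
  exact aux_not_dvd_choose hr s hrs a (hns ▸ hrd.trans hdvd)
end

section
/- For every integer m ≥ 4, gcd{C(m+1,i) : 2 ≤ i ≤ m-2} = d(m)·d(m-1), where d(k) = gcd{C(k+1,i) : 1 ≤ i ≤ k-1}. -/
open Nat

lemma lucas_not_dvd {p : ℕ} (hp : p.Prime) {n k : ℕ}
    (h : ¬ p ∣ (n % p).choose (k % p) * (n / p).choose (k / p)) :
    ¬ p ∣ n.choose k := by
  haveI : Fact p.Prime := ⟨hp⟩
  intro hd
  have hmod : n.choose k ≡ (n % p).choose (k % p) * (n / p).choose (k / p) [MOD p] :=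
    Choose.choose_modEq_choose_mod_mul_choose_div_nat
  have h0 : n.choose k ≡ 0 [MOD p] := (Nat.modEq_zero_iff_dvd).mpr hd
  exact h ((Nat.modEq_zero_iff_dvd).mp (hmod.symm.trans h0))

lemma not_dvd_choose_pow_of_digit {p : ℕ} (hp : p.Prime) :
    ∀ t n : ℕ, (n / p ^ t) % p ≠ 0 → ¬ p ∣ n.choose (p ^ t) := by
  intro t
  induction t with
  | zero =>
    intro n h hd
    rw [pow_zero, Nat.div_one] at h
    rw [pow_zero, Nat.choose_one_right] at hd
    obtain ⟨t, rfl⟩ := hd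
    exact h (Nat.mul_mod_right p t)
  | succ t ih =>
    intro n h
    apply lucas_not_dvd hp
    have hk1 : (p ^ (t + 1)) % p = 0 := by
      simp [pow_succ, Nat.mul_mod_left]
    have hk2 : (p ^ (t + 1)) / p = p ^ t := by
      rw [pow_succ]; exact Nat.mul_div_cancel _ hp.pos
    rw [hk1, hk2, Nat.choose_zero_right, one_mul]
    exact ih (n / p) (by rwa [Nat.div_div_eq_div_mul, ← _root_.pow_succ'])

lemma not_dvd_choose_pow_add_one {p : ℕ} (hp : p.Prime) (c n : ℕ) (hc : c ≠ 0)
    (h1 : n % p = 1) (hd : (n / p ^ c) % p ≠ 0) :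
    ¬ p ∣ n.choose (p ^ c + 1) := by
  obtain ⟨c, rfl⟩ : ∃ c', c = c' + 1 := ⟨c - 1, by omega⟩
  apply lucas_not_dvd hp
  have hps : p ^ (c + 1) = p * p ^ c := _root_.pow_succ' p c
  have e1 : (p ^ (c + 1) + 1) % p = 1 := by
    rw [hps, Nat.add_comm, Nat.add_mul_mod_self_left, Nat.mod_eq_of_lt hp.one_lt]
  have e2 : (p ^ (c + 1) + 1) / p = p ^ c := by
    rw [hps, Nat.mul_add_div hp.pos, Nat.div_eq_of_lt hp.one_lt, Nat.add_zero]
  rw [e1, e2, h1, Nat.choose_self, one_mul]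
  exact not_dvd_choose_pow_of_digit hp c (n / p)
    (by rwa [Nat.div_div_eq_div_mul, ← _root_.pow_succ'])

lemma not_dvd_choose_pow_sub_one {p : ℕ} (hp : p.Prime) :
    ∀ a k : ℕ, k ≤ p ^ a - 1 → ¬ p ∣ (p ^ a - 1).choose k := by
  intro a
  induction a with
  | zero =>
    intro k hk
    simp only [pow_zero, Nat.sub_self, Nat.le_zero] at hk
    subst hk
    simpa using hp.one_lt.ne'
  | succ a ih =>
    intro k hk
    have h1 : 1 ≤ p ^ a := Nat.one_le_pow _ _ hp.pos
    have hp2 : 2 ≤ p := hp.two_le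
    have key : p ^ (a + 1) - 1 = p * (p ^ a - 1) + (p - 1) := by
      obtain ⟨x, hx⟩ := Nat.exists_eq_add_of_le h1
      have hps : p ^ (a + 1) = p * p ^ a := _root_.pow_succ' p a
      have hmul : p * (1 + x) = p + p * x := by ring
      rw [hps, hx, Nat.add_sub_cancel_left]
      omega
    apply lucas_not_dvd hp
    have hn1 : (p ^ (a + 1) - 1) % p = p - 1 := by
      rw [key, Nat.mul_add_mod, Nat.mod_eq_of_lt (by omega)]
    have hn2 : (p ^ (a + 1) - 1) / p = p ^ a - 1 := by
      rw [key, Nat.mul_add_div hp.pos, Nat.div_eq_of_lt (by omega), Nat.add_zero]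
    rw [hn1, hn2]
    intro hd
    rcases (Nat.Prime.dvd_mul hp).mp hd with h | h
    · have hle : k % p ≤ p - 1 := by
        have := Nat.mod_lt k hp.pos; omega
      have hdvdfac : (p - 1).choose (k % p) ∣ (p - 1)! := by
        have hcc := Nat.choose_mul_factorial_mul_factorial hle
        exact ⟨(k % p)! * (p - 1 - k % p)!, by rw [← hcc]; ring⟩
      have hpf : p ∣ (p - 1)! := h.trans hdvdfac
      have := (Nat.Prime.dvd_factorial hp).mp hpf
      omega
    · refine ih (k / p) ?_ h
      have hdd : k / p ≤ (p ^ (a + 1) - 1) / p := Nat.div_le_div_right hk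
      rwa [hn2] at hdd

lemma sq_not_dvd_choose_pow_pow {p : ℕ} (hp : p.Prime) (a : ℕ) :
    ¬ p ^ 2 ∣ (p ^ (a + 1)).choose (p ^ a) := by
  intro hsq
  have hN : 1 ≤ p ^ (a + 1) := Nat.one_le_pow _ _ hp.pos
  have hK : 1 ≤ p ^ a := Nat.one_le_pow _ _ hp.pos
  have hid := Nat.add_one_mul_choose_eq (p ^ (a + 1) - 1) (p ^ a - 1)
  rw [Nat.sub_add_cancel hN, Nat.sub_add_cancel hK] at hid
  have hdvd : p ^ (a + 1) * p ∣ (p ^ (a + 1)).choose (p ^ a) * p ^ a := by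
    have h1 : p ^ 2 * p ^ a ∣ (p ^ (a + 1)).choose (p ^ a) * p ^ a :=
      mul_dvd_mul hsq dvd_rfl
    have he : p ^ 2 * p ^ a = p ^ (a + 1) * p := by ring
    rwa [he] at h1
  rw [← hid] at hdvd
  have hp' : p ∣ (p ^ (a + 1) - 1).choose (p ^ a - 1) :=
    (Nat.mul_dvd_mul_iff_left (pow_pos hp.pos (a + 1))).mp hdvd
  exact not_dvd_choose_pow_sub_one hp (a + 1) (p ^ a - 1)
    (Nat.sub_le_sub_right (Nat.pow_le_pow_right hp.pos (Nat.le_succ a)) 1) hp'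

lemma pow_dvd_choose_pow_sub {p : ℕ} (hp : p.Prime) (b : ℕ) :
    p ^ (b + 2) ∣ (p ^ (b + 2)).choose (p ^ (b + 1) - 1) := by
  have hK : 2 ≤ p ^ (b + 1) := by
    calc 2 ≤ p := hp.two_le
    _ ≤ p ^ (b + 1) := Nat.le_self_pow (by omega) p
  have hN : 1 ≤ p ^ (b + 2) := Nat.one_le_pow _ _ hp.pos
  have hid := Nat.add_one_mul_choose_eq (p ^ (b + 2) - 1) (p ^ (b + 1) - 1 - 1)
  rw [Nat.sub_add_cancel hN, Nat.sub_add_cancel (by omega)] at hid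
  have hnd : ¬ p ∣ (p ^ (b + 1) - 1) := by
    intro hdd
    have h2 : p ∣ p ^ (b + 1) := dvd_pow_self p (by omega)
    have h3 : p ∣ p ^ (b + 1) - (p ^ (b + 1) - 1) := Nat.dvd_sub h2 hdd
    rw [Nat.sub_sub_self (by omega)] at h3
    have := Nat.le_of_dvd one_pos h3
    have := hp.two_le
    omega
  have hcop : Nat.Coprime (p ^ (b + 2)) (p ^ (b + 1) - 1) :=
    ((Nat.Prime.coprime_iff_not_dvd hp).mpr hnd).pow_left _
  apply hcop.dvd_of_dvd_mul_right
  rw [← hid]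
  exact Dvd.intro _ rfl

lemma sq_not_dvd_choose_pow_succ {p : ℕ} (hp : p.Prime) (b : ℕ) :
    ¬ p ^ 2 ∣ (p ^ (b + 2) + 1).choose (p ^ (b + 1)) := by
  intro hsq
  have hK : 2 ≤ p ^ (b + 1) := by
    calc 2 ≤ p := hp.two_le
    _ ≤ p ^ (b + 1) := Nat.le_self_pow (by omega) p
  have hpas : (p ^ (b + 2) + 1).choose (p ^ (b + 1)) =
      (p ^ (b + 2)).choose (p ^ (b + 1) - 1) + (p ^ (b + 2)).choose (p ^ (b + 1)) := by
    have h := Nat.choose_succ_succ' (p ^ (b + 2)) (p ^ (b + 1) - 1)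
    rw [Nat.sub_add_cancel (by omega)] at h
    exact h
  rw [hpas] at hsq
  have h2 : p ^ 2 ∣ (p ^ (b + 2)).choose (p ^ (b + 1) - 1) :=
    dvd_trans (pow_dvd_pow p (by omega)) (pow_dvd_choose_pow_sub hp b)
  have h3 : p ^ 2 ∣ (p ^ (b + 2)).choose (p ^ (b + 1)) :=
    (Nat.dvd_add_right h2).mp hsq
  exact sq_not_dvd_choose_pow_pow hp (b + 1) h3

lemma pow_of_dvd_middle {p n : ℕ} (hp : p.Prime) (hn : 5 ≤ n)
    (hall : ∀ i, 2 ≤ i → i ≤ n - 3 → p ∣ n.choose i) :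
    (∃ a, n = p ^ a) ∨ (∃ b, n - 1 = p ^ b) := by
  have h2 : p ∣ n.choose 2 := hall 2 le_rfl (by omega)
  have hc2 : n.choose 2 * 2 = n * (n - 1) := by
    have hid := Nat.add_one_mul_choose_eq (n - 1) 1
    rw [Nat.sub_add_cancel (by omega), Nat.choose_one_right] at hid
    norm_num at hid
    omega
  have hnn : p ∣ n * (n - 1) := hc2 ▸ Dvd.dvd.mul_right h2 2
  rcases (Nat.Prime.dvd_mul hp).mp hnn with hpn | hpn
  · left
    have hn0 : n ≠ 0 := by omega
    obtain ⟨c, hc1, hpc, hsucc⟩ : ∃ c, 1 ≤ c ∧ p ^ c ∣ n ∧ ¬ p ^ (c + 1) ∣ n :=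
      ⟨n.factorization p, (Nat.Prime.dvd_iff_one_le_factorization hp hn0).mp hpn,
        Nat.ordProj_dvd n p, Nat.pow_succ_factorization_not_dvd hn0 hp⟩
    obtain ⟨w, hnw⟩ := hpc
    have hpw : ¬ p ∣ w := by
      rintro ⟨w', hw'⟩
      exact hsucc ⟨w', by rw [hnw, hw', pow_succ]; ring⟩
    refine ⟨c, ?_⟩
    by_contra hne
    have hw1 : w ≠ 1 := by
      intro h1; rw [h1, Nat.mul_one] at hnw; exact hne hnw
    have hw0 : w ≠ 0 := by
      intro h0; rw [h0, Nat.mul_zero] at hnw; omega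
    have hx2 : 2 ≤ p ^ c := by
      calc 2 ≤ p := hp.two_le
      _ ≤ p ^ c := Nat.le_self_pow (by omega) p
    have hbound : p ^ c + 3 ≤ n := by
      rcases Nat.lt_or_ge w 3 with hw3 | hw3
      · have hw2 : w = 2 := by omega
        have hp3 : 3 ≤ p := by
          by_contra hlt
          have hpp2 : p = 2 := by have := hp.two_le; omega
          exact hpw (by simp [hw2, hpp2])
        have hx3 : 3 ≤ p ^ c := le_trans hp3 (Nat.le_self_pow (by omega) p)
        rw [hnw, hw2]; omega
      · have hmm : p ^ c * 3 ≤ p ^ c * w := Nat.mul_le_mul_left _ hw3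
        rw [← hnw] at hmm; omega
    have hdiv : n / p ^ c = w := by
      rw [hnw]; exact Nat.mul_div_cancel_left w (by positivity)
    exact not_dvd_choose_pow_of_digit hp c n
      (by rw [hdiv]; exact fun h0 => hpw (Nat.dvd_of_mod_eq_zero h0))
      (hall (p ^ c) hx2 (by omega))
  · right
    have hM0 : n - 1 ≠ 0 := by omega
    obtain ⟨c, hc1, hpc, hsucc⟩ : ∃ c, 1 ≤ c ∧ p ^ c ∣ (n - 1) ∧ ¬ p ^ (c + 1) ∣ (n - 1) :=
      ⟨(n - 1).factorization p, (Nat.Prime.dvd_iff_one_le_factorization hp hM0).mp hpn,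
        Nat.ordProj_dvd (n - 1) p, Nat.pow_succ_factorization_not_dvd hM0 hp⟩
    obtain ⟨w, hnw⟩ := hpc
    have hpw : ¬ p ∣ w := by
      rintro ⟨w', hw'⟩
      exact hsucc ⟨w', by rw [hnw, hw', pow_succ]; ring⟩
    refine ⟨c, ?_⟩
    by_contra hne
    have hw1 : w ≠ 1 := by
      intro h1; rw [h1, Nat.mul_one] at hnw; exact hne hnw
    have hw0 : w ≠ 0 := by
      intro h0; rw [h0, Nat.mul_zero] at hnw; omega
    have hx2 : 2 ≤ p ^ c := by
      calc 2 ≤ p := hp.two_le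
      _ ≤ p ^ c := Nat.le_self_pow (by omega) p
    have hbound : p ^ c + 3 ≤ n - 1 := by
      rcases Nat.lt_or_ge w 3 with hw3 | hw3
      · have hw2 : w = 2 := by omega
        have hp3 : 3 ≤ p := by
          by_contra hlt
          have hpp2 : p = 2 := by have := hp.two_le; omega
          exact hpw (by simp [hw2, hpp2])
        have hx3 : 3 ≤ p ^ c := le_trans hp3 (Nat.le_self_pow (by omega) p)
        rw [hnw, hw2]; omega
      · have hmm : p ^ c * 3 ≤ p ^ c * w := Nat.mul_le_mul_left _ hw3
        rw [← hnw] at hmm; omega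
    have hmod1 : n % p = 1 := by
      obtain ⟨t, ht⟩ := hpn
      have hn' : n = p * t + 1 := by omega
      rw [hn', Nat.mul_add_mod, Nat.mod_eq_of_lt hp.one_lt]
    have hdig : (n / p ^ c) % p ≠ 0 := by
      have hdiv : n / p ^ c = w := by
        have hn' : n = p ^ c * w + 1 := by omega
        rw [hn', Nat.mul_add_div (by positivity), Nat.div_eq_of_lt (by omega), Nat.add_zero]
      rw [hdiv]
      exact fun h0 => hpw (Nat.dvd_of_mod_eq_zero h0)
    exact not_dvd_choose_pow_add_one hp c n (by omega) hmod1 hdig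
      (hall (p ^ c + 1) (by omega) (by omega))

lemma wit_pow {p a : ℕ} (hp : p.Prime) (h5 : 5 ≤ p ^ a) :
    ∃ i, 2 ≤ i ∧ i ≤ p ^ a - 3 ∧ ¬ p ^ 2 ∣ (p ^ a).choose i := by
  match a with
  | 0 => simp at h5
  | 1 =>
    have hp5 : 5 ≤ p := by simpa using h5
    refine ⟨2, le_rfl, by rw [pow_one]; omega, ?_⟩
    rw [pow_one]
    intro hsq
    have hid := Nat.add_one_mul_choose_eq (p - 1) 1
    rw [Nat.sub_add_cancel (by omega), Nat.choose_one_right] at hid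
    -- hid : p * (p - 1) = p.choose 2 * 2
    have hdvd : p ^ 2 ∣ p * (p - 1) := by
      rw [hid]; exact Dvd.dvd.mul_right hsq 2
    have hdd : p ∣ p - 1 := by
      obtain ⟨t, ht⟩ := hdvd
      refine ⟨t, Nat.eq_of_mul_eq_mul_left hp.pos ?_⟩
      rw [ht]; ring
    have := Nat.le_of_dvd (by omega) hdd
    omega
  | (a' + 2) =>
    refine ⟨p ^ (a' + 1), ?_, ?_, sq_not_dvd_choose_pow_pow hp (a' + 1)⟩
    · calc 2 ≤ p := hp.two_le
      _ ≤ p ^ (a' + 1) := Nat.le_self_pow (by omega) p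
    · have hps : p ^ (a' + 2) = p ^ (a' + 1) * p := pow_succ p (a' + 1)
      rcases Nat.lt_or_ge p 3 with hplt | hp3
      · have hp2' : p = 2 := by have := hp.two_le; omega
        subst hp2'
        have ha' : 1 ≤ a' := by
          by_contra h
          have ha0 : a' = 0 := by omega
          rw [ha0] at h5; norm_num at h5
        have h4 : 4 ≤ 2 ^ (a' + 1) := by
          calc (4 : ℕ) = 2 ^ 2 := by norm_num
          _ ≤ 2 ^ (a' + 1) := Nat.pow_le_pow_right (by norm_num) (by omega)
        rw [hps]; omega
      · have h2 : 2 ≤ p ^ (a' + 1) := le_trans hp.two_le (Nat.le_self_pow (by omega) p)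
        have hmm : p ^ (a' + 1) * 3 ≤ p ^ (a' + 1) * p := Nat.mul_le_mul_left _ hp3
        rw [← hps] at hmm; omega

lemma wit_pow_succ {p b : ℕ} (hp : p.Prime) (h4 : 4 ≤ p ^ b) :
    ∃ i, 2 ≤ i ∧ i ≤ p ^ b + 1 - 3 ∧ ¬ p ^ 2 ∣ (p ^ b + 1).choose i := by
  match b with
  | 0 => simp at h4
  | 1 =>
    have hp4 : 4 ≤ p := by simpa using h4
    have hp5 : 5 ≤ p := by
      rcases Nat.lt_or_ge p 5 with h | h
      · have hpp : p = 4 := by omega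
        rw [hpp] at hp; norm_num at hp
      · exact h
    refine ⟨2, le_rfl, by rw [pow_one]; omega, ?_⟩
    rw [pow_one]
    intro hsq
    have hid := Nat.add_one_mul_choose_eq p 1
    rw [Nat.choose_one_right] at hid
    -- hid : (p+1) * p = (p+1).choose 2 * 2
    have hdvd : p ^ 2 ∣ (p + 1) * p := by
      rw [hid]; exact Dvd.dvd.mul_right hsq 2
    have hdd : p ∣ p + 1 := by
      obtain ⟨t, ht⟩ := hdvd
      refine ⟨t, Nat.eq_of_mul_eq_mul_right hp.pos ?_⟩
      rw [ht]; ring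
    have h1 : p ∣ 1 := (Nat.dvd_add_right (dvd_refl p)).mp hdd
    have := Nat.le_of_dvd one_pos h1
    omega
  | (b' + 2) =>
    refine ⟨p ^ (b' + 1), ?_, ?_, sq_not_dvd_choose_pow_succ hp b'⟩
    · calc 2 ≤ p := hp.two_le
      _ ≤ p ^ (b' + 1) := Nat.le_self_pow (by omega) p
    · have hps : p ^ (b' + 2) = p ^ (b' + 1) * p := pow_succ p (b' + 1)
      have h2 : 2 ≤ p ^ (b' + 1) := le_trans hp.two_le (Nat.le_self_pow (by omega) p)
      have hmm : p ^ (b' + 1) * 2 ≤ p ^ (b' + 1) * p := Nat.mul_le_mul_left _ hp.two_le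
      rw [← hps] at hmm; omega

/-- For every `m ≥ 4`, `gcd{C(m+1,i) : 2 ≤ i ≤ m-2} = d(m)·d(m-1)`, where
`d(k) = gcd{C(k+1,i) : 1 ≤ i ≤ k-1}`. -/
theorem stmt_3 (m : ℕ) (hm : 4 ≤ m) :
    (Finset.Icc 2 (m - 2)).gcd (fun i => (m + 1).choose i) =
      ((Finset.Icc 1 (m - 1)).gcd (fun i => (m + 1).choose i)) *
        ((Finset.Icc 1 (m - 2)).gcd (fun i => m.choose i)) := by
  set D2 := (Finset.Icc 2 (m - 2)).gcd (fun i => (m + 1).choose i) with hD2def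
  set D := (Finset.Icc 1 (m - 1)).gcd (fun i => (m + 1).choose i) with hDdef
  set E := (Finset.Icc 1 (m - 2)).gcd (fun i => m.choose i) with hEdef
  have hD2dvd : ∀ i, 2 ≤ i → i ≤ m - 2 → D2 ∣ (m + 1).choose i := fun i h1 h2 =>
    Finset.gcd_dvd (Finset.mem_Icc.mpr ⟨h1, h2⟩)
  have hDdvd : ∀ i, 1 ≤ i → i ≤ m - 1 → D ∣ (m + 1).choose i := fun i h1 h2 =>
    Finset.gcd_dvd (Finset.mem_Icc.mpr ⟨h1, h2⟩)
  have hEdvd : ∀ i, 1 ≤ i → i ≤ m - 2 → E ∣ m.choose i := fun i h1 h2 =>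
    Finset.gcd_dvd (Finset.mem_Icc.mpr ⟨h1, h2⟩)
  have hD2ne : D2 ≠ 0 := by
    intro h0
    have hd := hD2dvd 2 le_rfl (by omega)
    rw [h0] at hd
    have h2 := Nat.eq_zero_of_zero_dvd hd
    have := Nat.choose_pos (show 2 ≤ m + 1 by omega)
    omega
  have hDne : D ≠ 0 := by
    intro h0
    have hd := hDdvd 1 le_rfl (by omega)
    rw [h0] at hd
    have h2 := Nat.eq_zero_of_zero_dvd hd
    have := Nat.choose_pos (show 1 ≤ m + 1 by omega)
    omega
  have hEne : E ≠ 0 := by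
    intro h0
    have hd := hEdvd 1 le_rfl (by omega)
    rw [h0] at hd
    have h2 := Nat.eq_zero_of_zero_dvd hd
    have := Nat.choose_pos (show 1 ≤ m by omega)
    omega
  have hDm1 : D ∣ m + 1 := by
    have := hDdvd 1 le_rfl (by omega)
    simpa [Nat.choose_one_right] using this
  have hEm : E ∣ m := by
    have := hEdvd 1 le_rfl (by omega)
    simpa [Nat.choose_one_right] using this
  have hcop : Nat.Coprime D E := by
    have h1 : Nat.Coprime (m + 1) m := by
      unfold Nat.Coprime
      rw [Nat.add_comm, Nat.gcd_add_self_left, Nat.gcd_one_left]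
    exact Nat.Coprime.coprime_dvd_left hDm1 (Nat.Coprime.coprime_dvd_right hEm h1)
  have dvd1 : D * E ∣ D2 := by
    apply Finset.dvd_gcd
    intro i hi
    rw [Finset.mem_Icc] at hi
    obtain ⟨j, rfl⟩ : ∃ j, i = j + 1 := ⟨i - 1, by omega⟩
    have hDdv : D ∣ (m + 1).choose (j + 1) := hDdvd _ (by omega) (by omega)
    have hEdv : E ∣ (m + 1).choose (j + 1) := by
      rw [Nat.choose_succ_succ']
      exact dvd_add (hEdvd j (by omega) (by omega)) (hEdvd (j + 1) (by omega) (by omega))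
    exact hcop.mul_dvd_of_dvd_of_dvd hDdv hEdv
  have dvd2 : D2 ∣ D * E := by
    rw [← Nat.factorization_le_iff_dvd hD2ne (Nat.mul_ne_zero hDne hEne), Finsupp.le_def]
    intro p
    by_cases pp : p.Prime
    swap
    · simp [Nat.factorization_eq_zero_of_not_prime _ pp]
    by_cases hpD2 : p ∣ D2
    swap
    · simp [Nat.factorization_eq_zero_of_not_dvd hpD2]
    have hall : ∀ i, 2 ≤ i → i ≤ (m + 1) - 3 → p ∣ (m + 1).choose i := fun i h1 h2 =>
      hpD2.trans (hD2dvd i h1 (by omega))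
    rcases pow_of_dvd_middle pp (by omega) hall with ⟨a, ha⟩ | ⟨b, hb⟩
    · -- m + 1 = p ^ a
      have hpa5 : 5 ≤ p ^ a := by omega
      obtain ⟨i, hi2, hile, hnsq⟩ := wit_pow pp hpa5
      have hiD2 : D2 ∣ (m + 1).choose i := hD2dvd i hi2 (by omega)
      have h1 : D2.factorization p ≤ 1 := by
        by_contra hgt
        have hsq : p ^ 2 ∣ D2 :=
          (Nat.Prime.pow_dvd_iff_le_factorization pp hD2ne).mpr (by omega)
        exact hnsq (ha ▸ (hsq.trans hiD2))
      have hpDdvd : p ∣ D := by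
        apply Finset.dvd_gcd
        intro j hj
        rw [Finset.mem_Icc] at hj
        have := Nat.Prime.dvd_choose_pow pp (n := a) (k := j) (by omega) (by omega)
        rwa [← ha] at this
      have h2 : 1 ≤ (D * E).factorization p := by
        rw [Nat.factorization_mul hDne hEne, Finsupp.add_apply]
        have := (Nat.Prime.dvd_iff_one_le_factorization pp hDne).mp hpDdvd
        omega
      omega
    · -- m = p ^ b
      have hpb4 : 4 ≤ p ^ b := by omega
      obtain ⟨i, hi2, hile, hnsq⟩ := wit_pow_succ pp hpb4
      have hiD2 : D2 ∣ (m + 1).choose i := hD2dvd i hi2 (by omega)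
      have h1 : D2.factorization p ≤ 1 := by
        by_contra hgt
        have hsq : p ^ 2 ∣ D2 :=
          (Nat.Prime.pow_dvd_iff_le_factorization pp hD2ne).mpr (by omega)
        apply hnsq
        have hfin : p ^ 2 ∣ (m + 1).choose i := hsq.trans hiD2
        rwa [show m + 1 = p ^ b + 1 by omega] at hfin
      have hpEdvd : p ∣ E := by
        apply Finset.dvd_gcd
        intro j hj
        rw [Finset.mem_Icc] at hj
        have := Nat.Prime.dvd_choose_pow pp (n := b) (k := j) (by omega) (by omega)
        rwa [show p ^ b = m by omega] at this
      have h2 : 1 ≤ (D * E).factorization p := by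
        rw [Nat.factorization_mul hDne hEne, Finsupp.add_apply]
        have := (Nat.Prime.dvd_iff_one_le_factorization pp hEne).mp hpEdvd
        omega
      omega
  exact Nat.dvd_antisymm dvd2 dvd1
end

section
/- Let m ≥ 5 and define D(m) = gcd{C(m+1,i) − C(m+1,i−1) : 3 ≤ i ≤ m−1}. Then D(m)/d(m) = d(m−1) if m is not of the form 2^k − 2, and D(m)/d(m) = 2 if m = 2^k − 2 for some k ≥ 3; in particular d(m) divides D(m). -/
open Nat

section
variable {p : ℕ}

/-- Lucas for a single digit: `C(n,c) ≡ C(n % p, c) (mod p)` for `c < p`. -/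
lemma lucas_digit (hp : p.Prime) (n c : ℕ) (hc : c < p) :
    ((n.choose c : ZMod p)) = ((n % p).choose c : ZMod p) := by
  haveI := Fact.mk hp
  have h := Choose.choose_modEq_choose_mod_mul_choose_div_nat (p := p) (n := n) (k := c)
  rw [Nat.mod_eq_of_lt hc, Nat.div_eq_of_lt hc, Nat.choose_zero_right, mul_one] at h
  exact_mod_cast (ZMod.natCast_eq_natCast_iff _ _ _).mpr h

/-- Iterated Lucas: `C(n, c * p^s) ≡ C((n / p^s) % p, c) (mod p)` for `c < p`. -/
lemma lucas_pow (hp : p.Prime) (c s : ℕ) (hc : c < p) :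
    ∀ n : ℕ, ((n.choose (c * p ^ s) : ZMod p)) = (((n / p ^ s) % p).choose c : ZMod p) := by
  haveI := Fact.mk hp
  induction s with
  | zero => intro n; simpa using lucas_digit hp n c hc
  | succ s ih =>
    intro n
    have h := Choose.choose_modEq_choose_mod_mul_choose_div_nat (p := p) (n := n)
      (k := c * p ^ (s+1))
    have h1 : c * p ^ (s+1) % p = 0 := by
      have : c * p ^ (s+1) = c * p ^ s * p := by ring
      rw [this, Nat.mul_mod_left]
    have h2 : c * p ^ (s+1) / p = c * p ^ s := by
      have : c * p ^ (s+1) = c * p ^ s * p := by ring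
      rw [this, Nat.mul_div_cancel _ hp.pos]
    rw [h1, h2, Nat.choose_zero_right, one_mul] at h
    have h' : ((n.choose (c * p ^ (s+1)) : ZMod p)) = ((n / p).choose (c * p ^ s) : ZMod p) :=
      (ZMod.natCast_eq_natCast_iff _ _ _).mpr h
    rw [h', ih (n / p), Nat.div_div_eq_div_mul, ← _root_.pow_succ']

/-- `C(n, p^s) ≡ (n / p^s) % p  (mod p)`. -/
lemma lucas_pow_one (hp : p.Prime) (s n : ℕ) :
    ((n.choose (p ^ s) : ZMod p)) = (((n / p ^ s) % p : ℕ) : ZMod p) := by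
  have := lucas_pow hp 1 s hp.one_lt n
  rwa [one_mul, Nat.choose_one_right] at this

lemma choose_prime_sub_one (hp : p.Prime) : ∀ b : ℕ, b ≤ p - 1 →
    (((p-1).choose b : ZMod p)) = (-1) ^ b := by
  haveI := Fact.mk hp
  intro b
  induction b with
  | zero => simp
  | succ b ih =>
    intro hb
    have hb' : b ≤ p - 1 := by omega
    have hp1 : p - 1 + 1 = p := by have := hp.pos; omega
    have hpas : p.choose (b+1) = (p-1).choose b + (p-1).choose (b+1) := by
      conv_lhs => rw [← hp1]
      exact Nat.choose_succ_succ' (p-1) b ▸ rfl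
    have hdvd : p ∣ p.choose (b+1) := hp.dvd_choose_self (by omega) (by omega)
    have h0 : ((p.choose (b+1) : ZMod p)) = 0 := by
      exact_mod_cast (ZMod.natCast_eq_zero_iff _ _).mpr hdvd
    rw [hpas] at h0
    push_cast at h0
    rw [ih hb'] at h0
    have : (((p-1).choose (b+1) : ZMod p)) = -(-1)^b := by linear_combination h0
    rw [this]
    ring

lemma choose_prime_sub_one_ne (hp : p.Prime) (b : ℕ) (hb : b ≤ p - 1) :
    (((p-1).choose b : ZMod p)) ≠ 0 := by
  haveI := Fact.mk hp
  rw [choose_prime_sub_one hp b hb]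
  exact pow_ne_zero b (neg_ne_zero.mpr one_ne_zero)

lemma choose_pow_sub_one_ne (hp : p.Prime) : ∀ s : ℕ, ∀ j : ℕ, j ≤ p ^ s - 1 →
    (((p ^ s - 1).choose j : ZMod p)) ≠ 0 := by
  haveI := Fact.mk hp
  have hp2 := hp.two_le
  intro s
  induction s with
  | zero =>
    intro j hj
    simp only [pow_zero] at hj
    have : j = 0 := by omega
    subst this; simp
  | succ s ih =>
    intro j hj
    have hps : 1 ≤ p ^ s := Nat.one_le_pow _ _ hp.pos
    have h1 : p ^ (s+1) = p ^ s * p := by ring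
    have h2 : (p ^ s - 1) * p = p ^ s * p - p := by
      obtain ⟨w, hw⟩ := Nat.exists_eq_add_of_le hps
      rw [hw]
      have h3 : (1 + w) * p = p + w * p := by ring
      have h4 : 1 + w - 1 = w := by omega
      rw [h3, h4]
      omega
    have h5 : p ≤ p ^ s * p := Nat.le_mul_of_pos_left p hps
    have hrw : p ^ (s+1) - 1 = (p - 1) + (p ^ s - 1) * p := by omega
    have hmod1 : (p ^ (s+1) - 1) % p = p - 1 := by
      rw [hrw, Nat.add_mul_mod_self_right, Nat.mod_eq_of_lt (by omega)]
    have hmod2 : (p ^ (s+1) - 1) / p = p ^ s - 1 := by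
      rw [hrw, Nat.add_mul_div_right _ _ hp.pos, Nat.div_eq_of_lt (by omega)]
      omega
    have h := Choose.choose_modEq_choose_mod_mul_choose_div_nat (p := p) (n := p^(s+1) - 1) (k := j)
    rw [hmod1, hmod2] at h
    have h' : (((p^(s+1) - 1).choose j : ZMod p))
        = ((p-1).choose (j % p) : ZMod p) * ((p ^ s - 1).choose (j / p) : ZMod p) := by
      have := (ZMod.natCast_eq_natCast_iff _ _ _).mpr h
      push_cast at this
      exact this
    rw [h']
    apply mul_ne_zero
    · exact choose_prime_sub_one_ne hp _ (by have := Nat.mod_lt j hp.pos; omega)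
    · apply ih
      have hle : j / p ≤ (p ^ (s+1) - 1) / p := Nat.div_le_div_right hj
      rw [hmod2] at hle
      exact hle
/-- `C(p^s, p^(s-1)) = p * c` with `p ∤ c`, for `s ≥ 1`. -/
lemma choose_pp_eq (hp : p.Prime) (s : ℕ) (hs : 1 ≤ s) :
    ∃ c : ℕ, (p ^ s).choose (p ^ (s-1)) = p * c ∧ ¬ p ∣ c := by
  haveI := Fact.mk hp
  refine ⟨(p ^ s - 1).choose (p ^ (s-1) - 1), ?_, ?_⟩
  · have hs1 : 1 ≤ p ^ (s-1) := Nat.one_le_pow _ _ hp.pos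
    have hs2 : 1 ≤ p ^ s := Nat.one_le_pow _ _ hp.pos
    have h := Nat.add_one_mul_choose_eq (p ^ s - 1) (p ^ (s-1) - 1)
    rw [show p ^ s - 1 + 1 = p ^ s by omega, show p ^ (s-1) - 1 + 1 = p ^ (s-1) by omega] at h
    have hps : p ^ s = p * p ^ (s - 1) := by
      conv_lhs => rw [show s = 1 + (s - 1) by omega]
      ring
    have hcalc : (p ^ s).choose (p ^ (s-1)) * p ^ (s-1)
        = (p * (p ^ s - 1).choose (p ^ (s-1) - 1)) * p ^ (s-1) := by
      rw [← h]
      nth_rewrite 1 [hps]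
      ring
    exact Nat.eq_of_mul_eq_mul_right (by omega) hcalc
  · intro hdvd
    have h0 : (((p ^ s - 1).choose (p ^ (s-1) - 1) : ZMod p)) = 0 :=
      (ZMod.natCast_eq_zero_iff _ _).mpr hdvd
    have hle : p ^ (s-1) ≤ p ^ s := Nat.pow_le_pow_right hp.pos (by omega)
    exact choose_pow_sub_one_ne hp s _ (by omega) h0

/-- `p^s ∣ C(p^s, j)` when `p ∤ j`. -/
lemma pow_dvd_choose_pp (hp : p.Prime) (s j : ℕ) (hj : ¬ p ∣ j) :
    p ^ s ∣ (p ^ s).choose j := by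
  have hj0 : j ≠ 0 := by rintro rfl; exact hj (dvd_zero p)
  obtain ⟨j', rfl⟩ : ∃ j', j = j' + 1 := ⟨j - 1, by omega⟩
  have hs2 : 1 ≤ p ^ s := Nat.one_le_pow _ _ hp.pos
  have h := Nat.add_one_mul_choose_eq (p ^ s - 1) j'
  rw [show p ^ s - 1 + 1 = p ^ s by omega] at h
  have hcop : Nat.Coprime (p ^ s) (j' + 1) :=
    Nat.Coprime.pow_left _ ((Nat.Prime.coprime_iff_not_dvd hp).mpr hj)
  exact hcop.dvd_of_dvd_mul_right ⟨_, h.symm⟩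

lemma choose_two_mul' (n : ℕ) (hn : 1 ≤ n) : n.choose 2 * 2 = n * (n - 1) := by
  have h := Nat.add_one_mul_choose_eq (n - 1) 1
  rw [show n - 1 + 1 = n by omega] at h
  rw [Nat.choose_one_right] at h
  norm_num at h
  omega

lemma choose_three_mul' (n : ℕ) (hn : 2 ≤ n) : n.choose 3 * 6 = n * (n - 1) * (n - 2) := by
  have h := Nat.add_one_mul_choose_eq (n - 1) 2
  rw [show n - 1 + 1 = n by omega] at h
  norm_num at h
  have h2 := choose_two_mul' (n-1) (by omega)
  have h3 : n.choose 3 * 6 = n * ((n-1).choose 2 * 2) := by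
    have h4 : n.choose 3 * 6 = (n.choose 3 * 3) * 2 := by ring
    rw [h4, ← h]
    ring
  rw [h2] at h3
  rw [h3, show n - 1 - 1 = n - 2 by omega]
  ring

/-- If all base-2 digits of even `N` in positions `1..t` are `1`, and `N < 2^(t+1)`,
then `N + 2 = 2^(t+1)`. -/
lemma bits_all_one (t N : ℕ) (h2 : 2 ≤ N) (hlt : N < 2 ^ (t+1)) (heven : N % 2 = 0)
    (hb : ∀ s, 1 ≤ s → s ≤ t → N / 2 ^ s % 2 = 1) : N + 2 = 2 ^ (t+1) := by
  have key : ∀ s, s ≤ t → 2 ^ (s+1) ∣ N + 2 := by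
    intro s
    induction s with
    | zero => intro _; simpa using (by omega : 2 ∣ N + 2)
    | succ s ih =>
      intro hst
      obtain ⟨q, hq⟩ := ih (by omega)
      have hP : 2 ≤ 2 ^ (s+1) := by
        have : (2:ℕ) ^ 1 ≤ 2 ^ (s+1) := Nat.pow_le_pow_right (by norm_num) (by omega)
        simpa using this
      have hq1 : 1 ≤ q := by
        rcases Nat.eq_zero_or_pos q with h | h
        · subst h; omega
        · exact h
      obtain ⟨q', rfl⟩ : ∃ q', q = q' + 1 := ⟨q - 1, by omega⟩
      have hexp : 2 ^ (s+1) * (q' + 1) = 2 ^ (s+1) * q' + 2 ^ (s+1) := by ring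
      have hNval : N = 2 ^ (s+1) * q' + (2 ^ (s+1) - 2) := by omega
      have hdiv : N / 2 ^ (s+1) = q' := by
        rw [hNval, Nat.mul_add_div (by omega : 0 < 2 ^ (s+1)),
          Nat.div_eq_of_lt (by omega)]
        omega
      have hbit := hb (s+1) (by omega) hst
      rw [hdiv] at hbit
      obtain ⟨w, hw⟩ : ∃ w, q' = 2 * w + 1 := ⟨q' / 2, by omega⟩
      refine ⟨w + 1, ?_⟩
      rw [hq, hw]
      ring
  have hfin := key t le_rfl
  have hP : 2 ≤ 2 ^ (t+1) := by
    have : (2:ℕ) ^ 1 ≤ 2 ^ (t+1) := Nat.pow_le_pow_right (by norm_num) (by omega)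
    simpa using this
  exact Nat.eq_of_dvd_of_lt_two_mul (by omega) hfin (by omega)

end
open Nat in
lemma stmt4_sixA3 (m : ℕ) (hm : 5 ≤ m) :
    ((m+1).choose 3 : ℤ) * 6 - ((m+1).choose 2 : ℤ) * 6 = (m+1) * m * ((m:ℤ) - 4) := by
  have e3 := choose_three_mul' (m+1) (by omega)
  have e2 := choose_two_mul' (m+1) (by omega)
  rw [show m+1-1 = m by omega, show m+1-2 = m-1 by omega] at e3
  rw [show m+1-1 = m by omega] at e2
  have e3' : ((m+1).choose 3 : ℤ) * 6 = (m+1) * m * ((m:ℤ) - 1) := by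
    have := congrArg (fun x : ℕ => (x : ℤ)) e3
    push_cast [Nat.cast_sub (show 1 ≤ m by omega)] at this
    linarith
  have e2' : ((m+1).choose 2 : ℤ) * 2 = (m+1) * m := by
    have := congrArg (fun x : ℕ => (x : ℤ)) e2
    push_cast at this
    linarith
  have : ((m+1).choose 2 : ℤ) * 6 = 3 * ((m+1) * (m:ℤ)) := by linarith
  rw [e3', this]
  ring

open Nat in
lemma stmt4_sixB (m : ℕ) (hm : 5 ≤ m) :
    (m.choose 3 : ℤ) * 6 - 6 * (m:ℤ) = m * ((m:ℤ) - 4) * ((m:ℤ) + 1) := by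
  have e3 := choose_three_mul' m (by omega)
  have e3' : (m.choose 3 : ℤ) * 6 = m * ((m:ℤ) - 1) * ((m:ℤ) - 2) := by
    have := congrArg (fun x : ℕ => (x : ℤ)) e3
    push_cast [Nat.cast_sub (show 1 ≤ m by omega), Nat.cast_sub (show 2 ≤ m by omega)] at this
    linarith
  rw [e3']
  ring

open Nat in
lemma stmt4_choose3_even (n : ℕ) (hn : 2 ∣ n) : ((n.choose 3 : ZMod 2)) = 0 := by
  haveI : Fact (Nat.Prime 2) := ⟨Nat.prime_two⟩
  have h := Choose.choose_modEq_choose_mod_mul_choose_div_nat (p := 2) (n := n) (k := 3)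
  have h1 : n % 2 = 0 := by omega
  rw [h1] at h
  norm_num at h
  have := (ZMod.natCast_eq_natCast_iff _ _ _).mpr h
  simpa using this

open Nat in
lemma stmt4_key (m : ℕ) (hm : 5 ≤ m) (D : ℤ)
    (T1'' : ∀ i j : ℕ, 2 ≤ i → i ≤ m - 1 → 2 ≤ j → j ≤ m - 1 →
      D ∣ ((m+1).choose i : ℤ) - ((m+1).choose j : ℤ))
    (T2o' : ∀ i : ℕ, Odd i → i ≤ m - 1 → D ∣ (m.choose i : ℤ) - (m : ℤ))
    (T2e'' : ∀ i j : ℕ, 2 ≤ i → i ≤ m - 1 → 2 ≤ j → j ≤ m - 1 → Even i → Even j →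
      D ∣ (m.choose i : ℤ) - (m.choose j : ℤ))
    (r : ℕ) (hrp : r.Prime) (hrD : (r:ℤ) ∣ D) :
    ((r ∣ m + 1 ∧ m + 1 = r ^ (m+1).factorization r)
      ∨ (r ∣ m ∧ m = r ^ m.factorization r)
      ∨ (r = 2 ∧ ∃ k, 3 ≤ k ∧ m = 2 ^ k - 2))
    ∧ ¬ ((r:ℤ) * r ∣ D) := by
  haveI := Fact.mk hrp
  have hr2 : 2 ≤ r := hrp.two_le
  have hzeq : ∀ X Y : ℕ, D ∣ (X:ℤ) - (Y:ℤ) → ((X : ZMod r)) = (Y : ZMod r) := by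
    intro X Y hXY
    have h1 : (r:ℤ) ∣ (X:ℤ) - Y := dvd_trans hrD hXY
    have h2 : (((X:ℤ) - Y : ℤ) : ZMod r) = 0 := by
      exact_mod_cast (ZMod.intCast_zmod_eq_zero_iff_dvd _ _).mpr h1
    push_cast at h2
    linear_combination h2
  have hne0 : ∀ x : ℕ, ¬ r ∣ x → ((x : ZMod r)) ≠ 0 := fun x hx h =>
    hx ((ZMod.natCast_eq_zero_iff _ _).mp h)
  have heq0 : ∀ x : ℕ, r ∣ x → ((x : ZMod r)) = 0 := fun x hx =>
    (ZMod.natCast_eq_zero_iff _ _).mpr hx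
  have hmodne : ∀ x : ℕ, ¬ r ∣ x → ((x % r : ℕ) : ZMod r) ≠ 0 := by
    intro x hx h
    have hlt : x % r < r := Nat.mod_lt _ (by omega)
    have hdd := (ZMod.natCast_eq_zero_iff _ _).mp h
    have h0 : x % r = 0 := Nat.eq_zero_of_dvd_of_lt hdd hlt
    exact hx (Nat.dvd_of_mod_eq_zero h0)
  by_cases hn : r ∣ m + 1
  · -- r divides n = m+1
    set s := (m+1).factorization r with hs
    have hs1 : 1 ≤ s := hrp.factorization_pos_of_dvd (by omega) hn
    have hordp : r ^ s ∣ m + 1 := Nat.ordProj_dvd _ _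
    have hu : ¬ r ∣ (m+1) / r^s := Nat.not_dvd_ordCompl hrp (by omega)
    have hns : m + 1 = r^s * ((m+1)/r^s) := (Nat.mul_div_cancel' hordp).symm
    have hrs1 : r ≤ r ^ s := by
      calc r = r^1 := (pow_one r).symm
      _ ≤ r^s := Nat.pow_le_pow_right (by omega) hs1
    by_cases hu1 : (m+1)/r^s = 1
    · -- prime power case
      have hpp : m + 1 = r ^ s := by rw [hns, hu1, mul_one]
      refine ⟨Or.inl ⟨hn, hpp⟩, ?_⟩
      intro hsq
      by_cases hs2 : 2 ≤ s
      · -- witness (r^(s-1), j0)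
        obtain ⟨c, hc, hpc⟩ := choose_pp_eq hrp s hs1
        have hrr : r * r^(s-1) = r^s := by
          rw [← _root_.pow_succ']
          congr 1
          omega
        have hj0 : ∃ j0 : ℕ, ¬ r ∣ j0 ∧ 2 ≤ j0 ∧ j0 ≤ m - 1 := by
          by_cases hre : r = 2
          · exact ⟨3, by rw [hre]; omega, by omega, by omega⟩
          · refine ⟨2, ?_, le_rfl, by omega⟩
            intro hdv
            have := Nat.le_of_dvd (by norm_num) hdv
            omega
        obtain ⟨j0, hj0nd, hj02, hj0m⟩ := hj0
        have hj0r : r * r ∣ (m+1).choose j0 := by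
          have h1 : r ^ s ∣ (m+1).choose j0 := by
            rw [hpp]; exact pow_dvd_choose_pp hrp s j0 hj0nd
          refine dvd_trans ?_ h1
          calc r * r = r^2 := by ring
          _ ∣ r^s := pow_dvd_pow r hs2
        have hmem1 : 2 ≤ r^(s-1) := by
          calc 2 ≤ r := hr2
          _ = r^1 := (pow_one r).symm
          _ ≤ r^(s-1) := Nat.pow_le_pow_right (by omega) (by omega)
        have hmem2 : r^(s-1) ≤ m - 1 := by
          have h2 : 2 * r^(s-1) ≤ r * r^(s-1) := Nat.mul_le_mul_right _ hr2
          omega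
        have hwit := T1'' (r^(s-1)) j0 hmem1 hmem2 hj02 hj0m
        have h2 : (r:ℤ)*r ∣ ((m+1).choose (r^(s-1)) : ℤ) - ((m+1).choose j0 : ℤ) :=
          dvd_trans hsq hwit
        have h3 : (r:ℤ)*r ∣ ((m+1).choose j0 : ℤ) := by
          have := Int.natCast_dvd_natCast.mpr hj0r
          push_cast at this
          exact this
        have h4 : (r:ℤ)*r ∣ ((m+1).choose (r^(s-1)) : ℤ) := by
          have := dvd_add h2 h3
          simpa using this
        have hX : (m+1).choose (r^(s-1)) = r * c := by rw [hpp]; exact hc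
        rw [hX] at h4
        push_cast at h4
        obtain ⟨k, hk⟩ := h4
        have hr0 : (r:ℤ) ≠ 0 := by exact_mod_cast (by omega : r ≠ 0)
        have h5 : (r:ℤ) ∣ (c:ℤ) := by
          refine ⟨k, ?_⟩
          apply mul_left_cancel₀ hr0
          rw [hk]; ring
        exact hpc (Int.natCast_dvd_natCast.mp h5)
      · -- s = 1 : m + 1 = r, witness A3
        have hreq : m + 1 = r := by rw [hpp, show s = 1 by omega, pow_one]
        have hwit := T1'' 3 2 (by omega) (by omega) (by omega) (by omega)
        have h2 : (r:ℤ)*r ∣ ((m+1).choose 3 : ℤ) - ((m+1).choose 2 : ℤ) := dvd_trans hsq hwit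
        have h3 : (r:ℤ)*r ∣ ((m:ℤ)+1) * m * ((m:ℤ) - 4) := by
          have := Dvd.dvd.mul_right h2 6
          rwa [sub_mul, stmt4_sixA3 m hm] at this
        have hcast : ((m:ℤ) + 1) = (r:ℤ) := by exact_mod_cast hreq
        rw [hcast] at h3
        obtain ⟨k, hk⟩ := h3
        have hr0 : (r:ℤ) ≠ 0 := by exact_mod_cast (by omega : r ≠ 0)
        have h4 : (r:ℤ) ∣ (m:ℤ) * ((m:ℤ) - 4) := by
          refine ⟨k, ?_⟩
          apply mul_left_cancel₀ hr0
          rw [← mul_assoc, hk]; ring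
        have hprime : Prime (r:ℤ) := Nat.prime_iff_prime_int.mp hrp
        have hm5 : (5:ℤ) ≤ (m:ℤ) := by exact_mod_cast hm
        rcases hprime.dvd_mul.mp h4 with h5 | h5
        · have := Int.le_of_dvd (by linarith) h5
          linarith
        · have := Int.le_of_dvd (by linarith) h5
          linarith
    · -- not a prime power : contradiction with r ∣ D
      exfalso
      set u := (m+1)/r^s with hudef
      have hu2 : 2 ≤ u := by
        rcases Nat.eq_zero_or_pos u with h | h
        · rw [h, mul_zero] at hns; omega
        · omega
      have humul : 2 * r^s ≤ m + 1 := by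
        calc 2 * r^s = r^s * 2 := by ring
        _ ≤ r^s * u := Nat.mul_le_mul_left _ hu2
        _ = m + 1 := hns.symm
      by_cases hre : r = 2
      · subst hre
        by_cases hse : s = 1
        · -- A3 odd
          have hwit := T1'' 3 2 (by omega) (by omega) (by omega) (by omega)
          have heq := hzeq _ _ hwit
          have hC3 : (((m+1).choose 3 : ZMod 2)) = 0 := stmt4_choose3_even (m+1) hn
          have hC2 : (((m+1).choose 2 : ZMod 2)) = (((m+1)/2 % 2 : ℕ) : ZMod 2) := by
            have := lucas_pow_one Nat.prime_two 1 (m+1)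
            rwa [pow_one] at this
          have hdiv : (m+1)/2 = u := by rw [hudef, hse, pow_one]
          have hmod : (m+1)/2 % 2 = 1 := by
            rw [hdiv]
            omega
          rw [hC3, hC2, hmod] at heq
          simp at heq
        · -- s ≥ 2 : pair (2^s, 2)
          have hmem : 2^s ≤ m - 1 := by omega
          have hwit := T1'' (2^s) 2 (by omega) hmem (by omega) (by omega)
          have heq := hzeq _ _ hwit
          have hCs : (((m+1).choose (2^s) : ZMod 2)) = (((m+1)/2^s % 2 : ℕ) : ZMod 2) :=
            lucas_pow_one Nat.prime_two s (m+1)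
          have hC2 : (((m+1).choose 2 : ZMod 2)) = (((m+1)/2 % 2 : ℕ) : ZMod 2) := by
            have := lucas_pow_one Nat.prime_two 1 (m+1)
            rwa [pow_one] at this
          have hmod1 : (m+1)/2^s % 2 = 1 := by rw [← hudef]; omega
          have h2div : (m+1)/2 = 2^(s-1) * u := by
            have hh : m + 1 = 2 * (2^(s-1) * u) := by
              rw [hns, ← mul_assoc]
              congr 2
              rw [← _root_.pow_succ']
              congr 1
              omega
            omega
          have hmod2 : (m+1)/2 % 2 = 0 := by
            rw [h2div]
            have : 2 ∣ 2^(s-1) * u := Dvd.dvd.mul_right (dvd_pow_self 2 (by omega)) u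
            omega
          rw [hCs, hC2, hmod1, hmod2] at heq
          simp at heq
      · -- r odd : pair (r^s, 2)
        have hr3 : 3 ≤ r := by
          rcases Nat.lt_or_ge r 3 with h | h
          · interval_cases r
            · exact absurd rfl hre
          · exact h
        have hmem : r^s ≤ m - 1 := by omega
        have hwit := T1'' (r^s) 2 (by omega) hmem (by omega) (by omega)
        have heq := hzeq _ _ hwit
        have hCs : (((m+1).choose (r^s) : ZMod r)) = (((m+1)/r^s % r : ℕ) : ZMod r) :=
          lucas_pow_one hrp s (m+1)
        have hmodn : (m+1) % r = 0 := by
          obtain ⟨w, hw⟩ := hn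
          rw [hw]; exact Nat.mul_mod_right r w
        have hC2 : (((m+1).choose 2 : ZMod r)) = ((((m+1) % r).choose 2 : ℕ) : ZMod r) :=
          lucas_digit hrp (m+1) 2 (by omega)
        have hC2' : (((m+1).choose 2 : ZMod r)) = 0 := by
          rw [hC2, hmodn, Nat.choose_eq_zero_of_lt (by norm_num)]
          simp
        have hne : (((m+1)/r^s % r : ℕ) : ZMod r) ≠ 0 := by
          apply hmodne
          rw [← hudef]
          exact hu
        rw [hCs, hC2'] at heq
        exact hne heq
  · by_cases hnm : r ∣ m
    · -- r ∣ m = n - 1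
      set b := m.factorization r with hbdef
      have hb1 : 1 ≤ b := hrp.factorization_pos_of_dvd (by omega) hnm
      have hordp : r ^ b ∣ m := Nat.ordProj_dvd _ _
      have hu : ¬ r ∣ m / r^b := Nat.not_dvd_ordCompl hrp (by omega)
      have hns : m = r^b * (m/r^b) := (Nat.mul_div_cancel' hordp).symm
      have hrb1 : r ≤ r ^ b := by
        calc r = r^1 := (pow_one r).symm
        _ ≤ r^b := Nat.pow_le_pow_right (by omega) hb1
      by_cases hu1 : m/r^b = 1
      · -- m = r^b
        have hpp : m = r ^ b := by rw [hns, hu1, mul_one]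
        refine ⟨Or.inr (Or.inl ⟨hnm, hpp⟩), ?_⟩
        intro hsq
        by_cases hre : r = 2
        · subst hre
          have hb3 : 3 ≤ b := by
            by_contra hlt
            have : 2^b ≤ 2^2 := Nat.pow_le_pow_right (by norm_num) (by omega)
            omega
          obtain ⟨c, hc, hpc⟩ := choose_pp_eq Nat.prime_two b hb1
          have hpow : 2 * 2^(b-1) = 2^b := by
            rw [← _root_.pow_succ']; congr 1; omega
          have h2p : 2 ≤ 2^(b-1) := by
            calc 2 = 2^1 := (pow_one 2).symm
            _ ≤ 2^(b-1) := Nat.pow_le_pow_right (by norm_num) (by omega)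
          have hpas : (m+1).choose (2^(b-1)) = m.choose (2^(b-1) - 1) + m.choose (2^(b-1)) := by
            have h := Nat.choose_succ_succ' m (2^(b-1) - 1)
            rw [show 2^(b-1) - 1 + 1 = 2^(b-1) by omega] at h
            exact h
          have hoddidx : ¬ 2 ∣ (2^(b-1) - 1) := by
            have h2d : 2 ∣ 2^(b-1) := dvd_pow_self 2 (by omega)
            omega
          have h4a : 4 ∣ m.choose (2^(b-1) - 1) := by
            have h1 : 2^b ∣ m.choose (2^(b-1)-1) := by
              rw [hpp]; exact pow_dvd_choose_pp Nat.prime_two b _ hoddidx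
            refine dvd_trans ?_ h1
            rw [show (4:ℕ) = 2^2 by norm_num]
            exact pow_dvd_pow 2 (by omega)
          have hC2eq : (m+1).choose 2 = (m+1) * 2^(b-1) := by
            have e2 := choose_two_mul' (m+1) (by omega)
            rw [show m+1-1 = m by omega] at e2
            have hh : (m+1).choose 2 * 2 = ((m+1) * 2^(b-1)) * 2 := by
              rw [e2]
              have hmrw : m = 2^(b-1) * 2 := by rw [hpp, ← hpow]; ring
              rw [hmrw]
              ring
            exact Nat.eq_of_mul_eq_mul_right (by norm_num) hh
          have h4b : 4 ∣ (m+1).choose 2 := by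
            rw [hC2eq]
            have h44 : (4:ℕ) ∣ 2^(b-1) := by
              rw [show (4:ℕ) = 2^2 by norm_num]
              exact pow_dvd_pow 2 (by omega)
            exact Dvd.dvd.mul_left h44 (m+1)
          have hmem2 : 2^(b-1) ≤ m - 1 := by omega
          have hwit := T1'' (2^(b-1)) 2 h2p hmem2 (by omega) (by omega)
          have h2' : (2:ℤ)*2 ∣ ((m+1).choose (2^(b-1)) : ℤ) - ((m+1).choose 2 : ℤ) :=
            dvd_trans hsq hwit
          have hz : (4:ℤ) ∣ ((m+1).choose (2^(b-1)) : ℤ) := by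
            have h1 : (4:ℤ) ∣ ((m+1).choose (2^(b-1)) : ℤ) - ((m+1).choose 2 : ℤ) := by
              rw [show (4:ℤ) = 2*2 by norm_num]
              exact h2'
            have h2'' : (4:ℤ) ∣ ((m+1).choose 2 : ℤ) := by
              have := Int.natCast_dvd_natCast.mpr h4b
              push_cast at this
              exact_mod_cast this
            have := dvd_add h1 h2''
            simpa using this
          have h4D : (4:ℕ) ∣ (m+1).choose (2^(b-1)) := by exact_mod_cast hz
          have hcc : m.choose (2^(b-1)) = 2 * c := by rw [hpp]; exact hc
          omega
        · -- r odd
          have hrodd : Odd r := hrp.odd_of_ne_two hre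
          have hr3 : 3 ≤ r := by
            rcases Nat.lt_or_ge r 3 with h | h
            · interval_cases r
              · exact absurd rfl hre
            · exact h
          by_cases hb2 : 2 ≤ b
          · obtain ⟨c, hc, hpc⟩ := choose_pp_eq hrp b hb1
            have hoddp : Odd (r^(b-1)) := hrodd.pow
            have hrr : r * r^(b-1) = r^b := by rw [← _root_.pow_succ']; congr 1; omega
            have hp1 : 1 ≤ r^(b-1) := Nat.one_le_pow _ _ (by omega)
            have hmem : r^(b-1) ≤ m - 1 := by
              have h2 : 3 * r^(b-1) ≤ r * r^(b-1) := Nat.mul_le_mul_right _ hr3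
              omega
            have hwit := T2o' (r^(b-1)) hoddp hmem
            have h2' : (r:ℤ)*r ∣ (m.choose (r^(b-1)) : ℤ) - (m:ℤ) := dvd_trans hsq hwit
            have hrrm : (r:ℤ)*r ∣ (m:ℤ) := by
              have h1 : (r^2 : ℕ) ∣ m := by rw [hpp]; exact pow_dvd_pow r hb2
              have h2 := Int.natCast_dvd_natCast.mpr h1
              push_cast at h2
              rw [show ((r:ℤ)*r) = (r:ℤ)^2 by ring]
              exact h2
            have h4 : (r:ℤ)*r ∣ (m.choose (r^(b-1)) : ℤ) := by
              have := dvd_add h2' hrrm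
              simpa using this
            have hX : m.choose (r^(b-1)) = r * c := by rw [hpp]; exact hc
            rw [hX] at h4
            push_cast at h4
            obtain ⟨k, hk⟩ := h4
            have hr0 : (r:ℤ) ≠ 0 := by exact_mod_cast (by omega : r ≠ 0)
            have h5 : (r:ℤ) ∣ (c:ℤ) := by
              refine ⟨k, ?_⟩
              apply mul_left_cancel₀ hr0
              rw [hk]; ring
            exact hpc (Int.natCast_dvd_natCast.mp h5)
          · -- b = 1 : m = r prime
            have hmr : m = r := by rw [hpp, show b = 1 by omega, pow_one]
            have hwit := T2o' 3 ⟨1, by norm_num⟩ (by omega)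
            have h2' : (r:ℤ)*r ∣ (m.choose 3 : ℤ) - (m:ℤ) := dvd_trans hsq hwit
            have h3 : (r:ℤ)*r ∣ (m:ℤ) * ((m:ℤ)-4) * ((m:ℤ)+1) := by
              have := Dvd.dvd.mul_right h2' 6
              rwa [show ((m.choose 3 :ℤ) - (m:ℤ))*6 = (m.choose 3:ℤ)*6 - 6*(m:ℤ) by ring,
                stmt4_sixB m hm] at this
            have hcast : (m:ℤ) = (r:ℤ) := by exact_mod_cast hmr
            rw [hcast] at h3
            obtain ⟨k, hk⟩ := h3
            have hr0 : (r:ℤ) ≠ 0 := by exact_mod_cast (by omega : r ≠ 0)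
            have h4 : (r:ℤ) ∣ ((r:ℤ)-4) * ((r:ℤ)+1) := by
              refine ⟨k, ?_⟩
              apply mul_left_cancel₀ hr0
              rw [← mul_assoc, hk]; ring
            have hprime : Prime (r:ℤ) := Nat.prime_iff_prime_int.mp hrp
            have hr5 : (5:ℤ) ≤ (r:ℤ) := by
              have : 5 ≤ r := by omega
              exact_mod_cast this
            rcases hprime.dvd_mul.mp h4 with h5 | h5
            · have := Int.le_of_dvd (by linarith) h5
              linarith
            · have h6 : (r:ℤ) ∣ 1 := by
                have := dvd_sub h5 (dvd_refl (r:ℤ))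
                simpa using this
              have := Int.le_of_dvd (by norm_num) h6
              linarith
      · -- m = r^b * u with u ≥ 2
        set u := m/r^b with hudef
        have hu2 : 2 ≤ u := by
          rcases Nat.eq_zero_or_pos u with h | h
          · rw [h, mul_zero] at hns; omega
          · omega
        have humul : 2 * r^b ≤ m := by
          calc 2 * r^b = r^b * 2 := by ring
          _ ≤ r^b * u := Nat.mul_le_mul_left _ hu2
          _ = m := hns.symm
        by_cases hre : r = 2
        · subst hre
          by_cases hb2 : 2 ≤ b
          · -- even pair (2^b, 2)
            exfalso
            have hmem : 2^b ≤ m - 1 := by omega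
            have hevb : Even (2^b) := by
              obtain ⟨k, hk⟩ := dvd_pow_self 2 (show b ≠ 0 by omega)
              exact ⟨k, by omega⟩
            have hwit := T2e'' (2^b) 2 (by omega) hmem (by omega) (by omega) hevb ⟨1, rfl⟩
            have heq := hzeq _ _ hwit
            have hCb : ((m.choose (2^b) : ZMod 2)) = ((m/2^b % 2 : ℕ) : ZMod 2) :=
              lucas_pow_one Nat.prime_two b m
            have hC2 : ((m.choose 2 : ZMod 2)) = ((m/2 % 2 : ℕ) : ZMod 2) := by
              have := lucas_pow_one Nat.prime_two 1 m
              rwa [pow_one] at this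
            have hmod1 : m/2^b % 2 = 1 := by rw [← hudef]; omega
            have h2div : m/2 = 2^(b-1) * u := by
              have hh : m = 2 * (2^(b-1) * u) := by
                rw [hns, ← mul_assoc]
                congr 2
                rw [← _root_.pow_succ']
                congr 1
                omega
              omega
            have hmod2 : m/2 % 2 = 0 := by
              rw [h2div]
              have : 2 ∣ 2^(b-1) * u := Dvd.dvd.mul_right (dvd_pow_self 2 (by omega)) u
              omega
            rw [hCb, hC2, hmod1, hmod2] at heq
            simp at heq
          · -- b = 1
            have hb1' : b = 1 := by omega
            have hm6 : 6 ≤ m := by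
              rcases hnm with ⟨w, hw⟩
              omega
            have hmu : m = 2 * u := by
              have := hns
              rwa [hb1', pow_one] at this
            have hudvd : ¬ 2 ∣ u := hu
            set t := Nat.log 2 m with htdef
            have ht2 : 2 ≤ t := by
              have h4 : 2^2 ≤ m := by omega
              exact (Nat.le_log_iff_pow_le (by norm_num) (by omega)).mpr h4
            have hlt : m < 2^(t+1) := Nat.lt_pow_succ_log_self (by norm_num) m
            have hple : 2^t ≤ m := Nat.pow_log_le_self 2 (by omega)
            by_cases hz : ∃ sz, 2 ≤ sz ∧ sz ≤ t ∧ m / 2^sz % 2 = 0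
            · exfalso
              obtain ⟨sz, hsz2, hszt, hsz0⟩ := hz
              have hszle : 2^sz ≤ 2^t := Nat.pow_le_pow_right (by norm_num) hszt
              have h4sz : 4 ≤ 2^sz := by
                calc (4:ℕ) = 2^2 := by norm_num
                _ ≤ 2^sz := Nat.pow_le_pow_right (by norm_num) hsz2
              have hne : 2^sz ≠ m := by
                intro hh
                rw [hh, Nat.div_self (by omega)] at hsz0
                omega
              have hevsz : Even (2^sz) := by
                obtain ⟨k, hk⟩ := dvd_pow_self 2 (show sz ≠ 0 by omega)
                exact ⟨k, by omega⟩
              have hwit := T2e'' 2 (2^sz) (by omega) (by omega) (by omega) (by omega)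
                ⟨1, rfl⟩ hevsz
              have heq := hzeq _ _ hwit
              have hC2 : ((m.choose 2 : ZMod 2)) = ((m/2 % 2 : ℕ) : ZMod 2) := by
                have := lucas_pow_one Nat.prime_two 1 m
                rwa [pow_one] at this
              have hCsz : ((m.choose (2^sz) : ZMod 2)) = ((m/2^sz % 2 : ℕ) : ZMod 2) :=
                lucas_pow_one Nat.prime_two sz m
              have hmod1 : m/2 % 2 = 1 := by
                have : m / 2 = u := by omega
                rw [this]
                omega
              rw [hC2, hCsz, hmod1, hsz0] at heq
              simp at heq
            · -- Mersenne case
              push_neg at hz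
              have hbits : ∀ s', 1 ≤ s' → s' ≤ t → m / 2^s' % 2 = 1 := by
                intro s' h1 h2
                rcases Nat.lt_or_ge s' 2 with h | h
                · have hs1 : s' = 1 := by omega
                  rw [hs1, pow_one]
                  have : m / 2 = u := by omega
                  rw [this]
                  omega
                · have := hz s' h h2
                  omega
              have hmers : m + 2 = 2^(t+1) := bits_all_one t m (by omega) hlt (by omega) hbits
              refine ⟨Or.inr (Or.inr ⟨rfl, t+1, by omega, by omega⟩), ?_⟩
              intro hsq
              have hwit := T1'' 3 2 (by omega) (by omega) (by omega) (by omega)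
              have h2' : (2:ℤ)*2 ∣ ((m+1).choose 3 : ℤ) - ((m+1).choose 2:ℤ) :=
                dvd_trans hsq hwit
              have h8 : (8:ℤ) ∣ ((m:ℤ)+1) * m * ((m:ℤ)-4) := by
                have h24 : (24:ℤ) ∣ (((m+1).choose 3 : ℤ) - ((m+1).choose 2:ℤ)) * 6 := by
                  obtain ⟨k, hk⟩ := h2'
                  exact ⟨k, by rw [hk]; ring⟩
                rw [sub_mul, stmt4_sixA3 m hm] at h24
                exact dvd_trans (by norm_num) h24
              have hu3 : 3 ≤ u := by omega
              have hueq : (m:ℤ) = 2 * (u:ℤ) := by exact_mod_cast hmu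
              have hP : ((m:ℤ)+1) * m * ((m:ℤ)-4) = 4 * (((m:ℤ)+1) * u * ((u:ℤ)-2)) := by
                rw [hueq]; ring
              rw [hP] at h8
              have h2q : (2:ℤ) ∣ ((m:ℤ)+1) * u * ((u:ℤ)-2) := by
                obtain ⟨k, hk⟩ := h8
                exact ⟨k, by linarith⟩
              obtain ⟨k, hk⟩ : ∃ k:ℕ, u = 2*k+1 := ⟨u/2, by omega⟩
              have hkz : (u:ℤ) = 2*(k:ℤ)+1 := by exact_mod_cast hk
              have o2 : Odd ((u:ℤ)) := ⟨(k:ℤ), hkz⟩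
              have o1 : Odd ((m:ℤ)+1) := ⟨(u:ℤ), by rw [hueq]⟩
              have o3 : Odd ((u:ℤ)-2) := ⟨(k:ℤ)-1, by rw [hkz]; ring⟩
              have hoddP := (o1.mul o2).mul o3
              obtain ⟨j, hj⟩ := hoddP
              obtain ⟨j2, hj2⟩ := h2q
              omega
        · -- r odd : pair (r^b, 1)
          exfalso
          have hr3 : 3 ≤ r := by
            rcases Nat.lt_or_ge r 3 with h | h
            · interval_cases r
              · exact absurd rfl hre
            · exact h
          have hoddp : Odd (r^b) := (hrp.odd_of_ne_two hre).pow
          have hmem : r^b ≤ m - 1 := by omega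
          have hwit := T2o' (r^b) hoddp hmem
          have heq := hzeq _ _ hwit
          have hCb : ((m.choose (r^b) : ZMod r)) = ((m / r^b % r : ℕ) : ZMod r) :=
            lucas_pow_one hrp b m
          have hm0 : ((m : ℕ) : ZMod r) = 0 := heq0 m hnm
          rw [hCb, hm0] at heq
          have hne : ((m/r^b % r : ℕ) : ZMod r) ≠ 0 := by
            apply hmodne
            rw [← hudef]
            exact hu
          exact hne heq
    · -- r divides neither m+1 nor m
      exfalso
      have hre : r ≠ 2 := by
        intro h; subst h
        omega
      have hr3 : 3 ≤ r := by omega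
      have hwitA3 := T1'' 3 2 (by omega) (by omega) (by omega) (by omega)
      by_cases hbig : m + 1 < r
      · have h1 : (r:ℤ) ∣ ((m+1).choose 3 : ℤ) - ((m+1).choose 2:ℤ) := dvd_trans hrD hwitA3
        have h2 : (r:ℤ) ∣ ((m:ℤ)+1) * m * ((m:ℤ)-4) := by
          have := Dvd.dvd.mul_right h1 6
          rwa [sub_mul, stmt4_sixA3 m hm] at this
        have hprime : Prime (r:ℤ) := Nat.prime_iff_prime_int.mp hrp
        have hm5 : (5:ℤ) ≤ (m:ℤ) := by exact_mod_cast hm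
        have hrb : ((m:ℤ)+1) < (r:ℤ) := by exact_mod_cast hbig
        rcases hprime.dvd_mul.mp h2 with h3 | h3
        · rcases hprime.dvd_mul.mp h3 with h4 | h4
          · have := Int.le_of_dvd (by linarith) h4; linarith
          · have := Int.le_of_dvd (by linarith) h4; linarith
        · have := Int.le_of_dvd (by linarith) h3; linarith
      · set t := Nat.log r (m+1) with htdef
        have ht1 : 1 ≤ t := Nat.log_pos (by omega) (by omega)
        have hple : r^t ≤ m+1 := Nat.pow_log_le_self r (by omega)
        have hlt : m+1 < r^(t+1) := Nat.lt_pow_succ_log_self (by omega) (m+1)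
        have hrt : r ≤ r^t := by
          calc r = r^1 := (pow_one r).symm
          _ ≤ r^t := Nat.pow_le_pow_right (by omega) ht1
        have hq1 : 1 ≤ (m+1)/r^t := (Nat.one_le_div_iff (by omega)).mpr hple
        have hqr : (m+1)/r^t < r := by
          have hmul : r^(t+1) = r * r^t := _root_.pow_succ' r t
          rw [Nat.div_lt_iff_lt_mul (show 0 < r^t by omega)]
          omega
        by_cases hc2 : r ∣ (m+1).choose 2
        · have hne1 : m+1 ≠ r^t := by
            intro h
            exact hn (h ▸ dvd_pow_self r (by omega))
          have hne2 : m ≠ r^t := by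
            intro h
            exact hnm (h ▸ dvd_pow_self r (by omega))
          have hmem : r^t ≤ m - 1 := by omega
          have hwit := T1'' (r^t) 2 (by omega) hmem (by omega) (by omega)
          have heq := hzeq _ _ hwit
          have hCt : (((m+1).choose (r^t) : ZMod r)) = (((m+1)/r^t % r : ℕ) : ZMod r) :=
            lucas_pow_one hrp t (m+1)
          have hC20 : (((m+1).choose 2 : ZMod r)) = 0 := heq0 _ hc2
          rw [hCt, hC20] at heq
          rw [Nat.mod_eq_of_lt hqr] at heq
          have hdd := (ZMod.natCast_eq_zero_iff _ _).mp heq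
          have := Nat.le_of_dvd (by omega) hdd
          omega
        · set n0 := (m+1) % r with hn0def
          have hn01 : 1 ≤ n0 := by
            have h0 : (m+1) % r ≠ 0 := fun h => hn (Nat.dvd_of_mod_eq_zero h)
            omega
          have hn0r : n0 < r := Nat.mod_lt _ (by omega)
          by_cases hl : n0 = r - 1
          · by_cases hr3' : r = 3
            · subst hr3'
              have hC2v : (((m+1).choose 2 : ZMod 3)) = ((Nat.choose 2 2 : ℕ) : ZMod 3) := by
                have h := lucas_digit (by norm_num : Nat.Prime 3) (m+1) 2 (by norm_num)
                rw [← hn0def, hl] at h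
                exact h
              have hC3v : (((m+1).choose 3 : ZMod 3)) = (((m+1)/3 % 3 : ℕ) : ZMod 3) := by
                have h := lucas_pow_one (by norm_num : Nat.Prime 3) 1 (m+1)
                rwa [pow_one] at h
              have heq := hzeq _ _ hwitA3
              rw [hC3v, hC2v] at heq
              have hlt3 : (m+1)/3 % 3 < 3 := Nat.mod_lt _ (by norm_num)
              have hv : (m+1)/3 % 3 = 1 := by
                have h2 := (ZMod.natCast_eq_natCast_iff _ _ _).mp heq
                have h3 : (m+1)/3 % 3 % 3 = Nat.choose 2 2 % 3 := h2
                rw [Nat.choose_self] at h3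
                omega
              have hm8 : 8 ≤ m + 1 := by omega
              have hwit6 := T1'' 6 2 (by omega) (by omega) (by omega) (by omega)
              have heq6 := hzeq _ _ hwit6
              have hC6v : (((m+1).choose 6 : ZMod 3))
                  = (((((m+1)/3) % 3).choose 2 : ℕ) : ZMod 3) := by
                have h := lucas_pow (by norm_num : Nat.Prime 3) 2 1 (by norm_num) (m+1)
                norm_num at h
                exact h
              rw [hC6v, hv, hC2v, Nat.choose_self, Nat.choose_eq_zero_of_lt (by norm_num)] at heq6
              simp at heq6
            · have hr5 : 5 ≤ r := by
                by_contra hlt5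
                interval_cases r
                · exact hr3' rfl
                · exact (by norm_num : ¬ Nat.Prime 4) hrp
              have hC2v : (((m+1).choose 2 : ZMod r)) = (((r-1).choose 2 : ℕ) : ZMod r) := by
                have h := lucas_digit hrp (m+1) 2 (by omega)
                rw [← hn0def, hl] at h
                exact h
              have hC3v : (((m+1).choose 3 : ZMod r)) = (((r-1).choose 3 : ℕ) : ZMod r) := by
                have h := lucas_digit hrp (m+1) 3 (by omega)
                rw [← hn0def, hl] at h
                exact h
              have hv2 : (((r-1).choose 2 : ℕ) : ZMod r) = 1 := by
                rw [choose_prime_sub_one hrp 2 (by omega)]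
                norm_num
              have hv3 : (((r-1).choose 3 : ℕ) : ZMod r) = -1 := by
                rw [choose_prime_sub_one hrp 3 (by omega)]
                norm_num [pow_succ]
              have heq := hzeq _ _ hwitA3
              rw [hC3v, hC2v, hv3, hv2] at heq
              have h20 : ((2:ℕ) : ZMod r) = 0 := by
                push_cast
                linear_combination -heq
              have hdd := (ZMod.natCast_eq_zero_iff _ _).mp h20
              have := Nat.le_of_dvd (by norm_num) hdd
              omega
          · have hub : r ≤ m - 1 := by
              have h1 : r ≠ m+1 := fun h => hn (h ▸ dvd_refl r)
              have h2 : r ≠ m := fun h => hnm (h ▸ dvd_refl r)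
              omega
            have hwit := T1'' (n0+1) 2 (by omega) (by omega) (by omega) (by omega)
            have heq := hzeq _ _ hwit
            have hCi : (((m+1).choose (n0+1) : ZMod r)) = 0 := by
              have h := lucas_digit hrp (m+1) (n0+1) (by omega)
              rw [← hn0def] at h
              rw [h, Nat.choose_eq_zero_of_lt (by omega)]
              simp
            rw [hCi] at heq
            exact hc2 ((ZMod.natCast_eq_zero_iff _ _).mp heq.symm)

/-- For `m ≥ 5`, with `d(k) = gcd{C(k+1,i) : 1 ≤ i ≤ k-1}` and
`D(m) = gcd{C(m+1,i) − C(m+1,i−1) : 3 ≤ i ≤ m−1}`, one has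
`D(m)/d(m) = d(m−1)` if `m` is not of the form `2^k − 2`, and
`D(m)/d(m) = 2` if `m = 2^k − 2` for some `k ≥ 3`; in particular
`d(m)` divides `D(m)`. -/
theorem stmt_4 (m : ℕ) (hm : 5 ≤ m)
    (d : ℕ → ℕ) (hd : ∀ k, d k = (Finset.Icc 1 (k - 1)).gcd (fun i => (k + 1).choose i))
    (D : ℤ)
    (hD : D = (Finset.Icc 3 (m - 1)).gcd
      (fun i => ((m + 1).choose i : ℤ) - ((m + 1).choose (i - 1) : ℤ))) :
    (d m : ℤ) ∣ D ∧
    ((¬ ∃ k : ℕ, 3 ≤ k ∧ m = 2 ^ k - 2) → D = (d m : ℤ) * (d (m - 1) : ℤ)) ∧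
    ((∃ k : ℕ, 3 ≤ k ∧ m = 2 ^ k - 2) → D = 2 * (d m : ℤ)) := by
  have hA : ∀ i, 3 ≤ i → i ≤ m - 1 →
      D ∣ ((m+1).choose i : ℤ) - ((m+1).choose (i-1) : ℤ) := by
    intro i h1 h2
    rw [hD]
    exact Finset.gcd_dvd (Finset.mem_Icc.mpr ⟨h1, h2⟩)
  have hA' : ∀ j, j + 3 ≤ m - 1 →
      D ∣ ((m+1).choose (j+3) : ℤ) - ((m+1).choose (j+2) : ℤ) := by
    intro j hj
    have h := hA (j+3) (by omega) hj
    rwa [show j+3-1 = j+2 by omega] at h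
  have hPas : ∀ j : ℕ, ((m+1).choose (j+3) : ℤ) - ((m+1).choose (j+2) : ℤ)
      = (m.choose (j+3) : ℤ) - (m.choose (j+1) : ℤ) := by
    intro j
    rw [Nat.choose_succ_succ' m (j+2), Nat.choose_succ_succ' m (j+1)]
    push_cast
    ring
  have hA2 : ∀ j, j + 3 ≤ m - 1 → D ∣ (m.choose (j+3) : ℤ) - (m.choose (j+1) : ℤ) := by
    intro j hj
    rw [← hPas j]
    exact hA' j hj
  have T1 : ∀ j, j + 2 ≤ m - 1 → D ∣ ((m+1).choose (j+2) : ℤ) - ((m+1).choose 2 : ℤ) := by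
    intro j
    induction j with
    | zero => intro _; simp
    | succ j ih =>
      intro hj
      have h1 := hA' j (by omega)
      have h2 := ih (by omega)
      have h3 := dvd_add h1 h2
      rw [sub_add_sub_cancel] at h3
      rw [show j+1+2 = j+3 by omega]
      exact h3
  have T1' : ∀ i, 2 ≤ i → i ≤ m - 1 →
      D ∣ ((m+1).choose i : ℤ) - ((m+1).choose 2 : ℤ) := by
    intro i h1 h2
    obtain ⟨j, rfl⟩ : ∃ j, i = j + 2 := ⟨i - 2, by omega⟩
    exact T1 j h2
  have T1'' : ∀ i j, 2 ≤ i → i ≤ m-1 → 2 ≤ j → j ≤ m-1 →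
      D ∣ ((m+1).choose i :ℤ) - ((m+1).choose j :ℤ) := by
    intro i j h1 h2 h3 h4
    have h := dvd_sub (T1' i h1 h2) (T1' j h3 h4)
    rwa [sub_sub_sub_cancel_right] at h
  have T2oJ : ∀ j, 2*j + 1 ≤ m - 1 → D ∣ (m.choose (2*j+1) : ℤ) - (m : ℤ) := by
    intro j
    induction j with
    | zero => intro _; norm_num
    | succ j ih =>
      intro hj
      have h1 := hA2 (2*j) (by omega)
      have h2 := ih (by omega)
      rw [show 2*j+3 = 2*j+1+2 by omega] at h1
      rw [show 2*j+1+2 = 2*j+3 by omega] at h1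
      have h3 := dvd_add h1 h2
      rw [show 2*j+1 = 2*j+1 from rfl, sub_add_sub_cancel] at h3
      rw [show 2*(j+1)+1 = 2*j+3 by omega]
      exact h3
  have T2o' : ∀ i, Odd i → i ≤ m - 1 → D ∣ (m.choose i : ℤ) - (m : ℤ) := by
    intro i hodd hle
    obtain ⟨j, rfl⟩ := hodd
    exact T2oJ j hle
  have T2eJ : ∀ j, 2*j + 2 ≤ m - 1 → D ∣ (m.choose (2*j+2) : ℤ) - (m.choose 2 : ℤ) := by
    intro j
    induction j with
    | zero => intro _; norm_num
    | succ j ih =>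
      intro hj
      have h1 := hA2 (2*j+1) (by omega)
      have h2 := ih (by omega)
      rw [show 2*j+1+3 = 2*j+4 by omega, show 2*j+1+1 = 2*j+2 by omega] at h1
      have h3 := dvd_add h1 h2
      rw [sub_add_sub_cancel] at h3
      rw [show 2*(j+1)+2 = 2*j+4 by omega]
      exact h3
  have T2e'' : ∀ i j, 2 ≤ i → i ≤ m-1 → 2 ≤ j → j ≤ m-1 → Even i → Even j →
      D ∣ (m.choose i :ℤ) - (m.choose j :ℤ) := by
    intro i j hi1 hi2 hj1 hj2 hei hej
    obtain ⟨a, ha⟩ := hei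
    obtain ⟨a', rfl⟩ : ∃ a', i = 2*a' + 2 := ⟨a - 1, by omega⟩
    obtain ⟨b, hb⟩ := hej
    obtain ⟨b', rfl⟩ : ∃ b', j = 2*b' + 2 := ⟨b - 1, by omega⟩
    have h := dvd_sub (T2eJ a' hi2) (T2eJ b' hj2)
    rwa [sub_sub_sub_cancel_right] at h
  have h6A3 := stmt4_sixA3 m hm
  have hDnn : 0 ≤ D := by
    have h1 : normalize D = D := by rw [hD]; exact Finset.normalize_gcd
    have h2 : |D| = D := by rw [Int.abs_eq_normalize, h1]
    linarith [abs_nonneg D]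
  have hD0 : D ≠ 0 := by
    intro h0
    have hw := hA' 0 (by omega)
    rw [h0] at hw
    have heq := zero_dvd_iff.mp hw
    norm_num at heq
    have h6 : ((m:ℤ)+1) * m * ((m:ℤ) - 4) = 0 := by linarith [h6A3, heq]
    have hm5 : (5:ℤ) ≤ (m:ℤ) := by exact_mod_cast hm
    have hpos : (0:ℤ) < ((m:ℤ)+1) * m * ((m:ℤ)-4) := by
      apply mul_pos (mul_pos (by linarith) (by linarith))
      linarith
    linarith
  have hdmchoose : ∀ i, 1 ≤ i → i ≤ m - 1 → d m ∣ (m+1).choose i := by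
    intro i h1 h2
    rw [hd m]
    exact Finset.gcd_dvd (Finset.mem_Icc.mpr ⟨h1, h2⟩)
  have hdmD : (d m : ℤ) ∣ D := by
    rw [hD]
    apply Finset.dvd_gcd
    intro i hi
    rw [Finset.mem_Icc] at hi
    have c1 := hdmchoose i (by omega) hi.2
    have c2 := hdmchoose (i-1) (by omega) (by omega)
    exact dvd_sub (Int.natCast_dvd_natCast.mpr c1) (Int.natCast_dvd_natCast.mpr c2)
  have hdd1 := hd (m-1)
  rw [show m-1+1 = m by omega, show m-1-1 = m-2 by omega] at hdd1
  have hdm1c2 : ∀ i, 1 ≤ i → i ≤ m - 2 → d (m-1) ∣ m.choose i := by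
    intro i h1 h2
    rw [hdd1]
    exact Finset.gcd_dvd (Finset.mem_Icc.mpr ⟨h1, h2⟩)
  have hdm1choose : ∀ i, 1 ≤ i → i ≤ m - 1 → d (m-1) ∣ m.choose i := by
    intro i h1 h2
    by_cases h : i ≤ m - 2
    · exact hdm1c2 i h1 h
    · have hieq : i = m - 1 := by omega
      rw [hieq, Nat.choose_symm (show 1 ≤ m by omega)]
      exact hdm1c2 1 le_rfl (by omega)
  have hdm1D : (d (m-1) : ℤ) ∣ D := by
    rw [hD]
    apply Finset.dvd_gcd
    intro i hi
    rw [Finset.mem_Icc] at hi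
    obtain ⟨j, rfl⟩ : ∃ j, i = j + 3 := ⟨i - 3, by omega⟩
    have hgoal : (d (m-1) : ℤ) ∣ ((m+1).choose (j+3) : ℤ) - ((m+1).choose (j+3-1) : ℤ) := by
      rw [show j+3-1 = j+2 by omega, hPas j]
      have c1 := hdm1choose (j+3) (by omega) hi.2
      have c2 := hdm1choose (j+1) (by omega) (by omega)
      exact dvd_sub (Int.natCast_dvd_natCast.mpr c1) (Int.natCast_dvd_natCast.mpr c2)
    exact hgoal
  have hdm_n : d m ∣ m + 1 := by
    have h := hdmchoose 1 (by omega) (by omega)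
    simpa using h
  have hdm1_m : d (m-1) ∣ m := by
    have h := hdm1choose 1 (by omega) (by omega)
    simpa using h
  have hdm0 : d m ≠ 0 := by
    intro h
    rw [h] at hdm_n
    have := zero_dvd_iff.mp hdm_n
    omega
  have hdm10 : d (m-1) ≠ 0 := by
    intro h
    rw [h] at hdm1_m
    have := zero_dvd_iff.mp hdm1_m
    omega
  have key := stmt4_key m hm D T1'' T2o' T2e''
  have habs : (D.natAbs : ℤ) = D := Int.natAbs_of_nonneg hDnn
  have hDA0 : D.natAbs ≠ 0 := by
    intro h
    exact hD0 (by rwa [Int.natAbs_eq_zero] at h)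
  have hfinal : ∀ E : ℕ, E ≠ 0 → ((E:ℤ) ∣ D) →
      (∀ r : ℕ, r.Prime → r ∣ D.natAbs → r ∣ E) → D = (E : ℤ) := by
    intro E hE0 hED hprimes
    have hup : D.natAbs ∣ E := by
      rw [← Nat.factorization_le_iff_dvd hDA0 hE0, Finsupp.le_def]
      intro r
      by_cases hr : r.Prime ∧ r ∣ D.natAbs
      · obtain ⟨hrp, hrd⟩ := hr
        have hrD : (r:ℤ) ∣ D := by
          rw [← habs]
          exact_mod_cast Int.natCast_dvd_natCast.mpr hrd
        have hK := key r hrp hrD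
        have h1 : D.natAbs.factorization r ≤ 1 := by
          by_contra hgt
          have h2 : r^2 ∣ D.natAbs := (hrp.pow_dvd_iff_le_factorization hDA0).mpr (by omega)
          have h3 : ((r:ℤ))*r ∣ D := by
            have h4 := Int.natCast_dvd_natCast.mpr h2
            rw [habs] at h4
            push_cast at h4
            rw [show (r:ℤ)*r = (r:ℤ)^2 by ring]
            exact h4
          exact hK.2 h3
        have h2 : 1 ≤ E.factorization r := hrp.factorization_pos_of_dvd hE0 (hprimes r hrp hrd)
        omega
      · have h0 : D.natAbs.factorization r = 0 := by
          rcases not_and_or.mp hr with h | h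
          · exact Nat.factorization_eq_zero_of_not_prime _ h
          · exact Nat.factorization_eq_zero_of_not_dvd h
        rw [h0]
        exact Nat.zero_le _
    have hdown : E ∣ D.natAbs := by
      have h : (E:ℤ) ∣ (D.natAbs:ℤ) := by rw [habs]; exact hED
      exact_mod_cast h
    have heq := Nat.dvd_antisymm hup hdown
    rw [← habs, heq]
  refine ⟨hdmD, ?_, ?_⟩
  · -- non-Mersenne
    intro hnm
    have hcopN : Nat.Coprime (d m) (d (m-1)) := by
      have hc : Nat.Coprime (m+1) m := by
        have h := Nat.dvd_sub (Nat.gcd_dvd_left (m+1) m) (Nat.gcd_dvd_right (m+1) m)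
        simp only [Nat.add_sub_cancel_left] at h
        exact Nat.dvd_one.mp (by simpa using h)
      exact Nat.Coprime.coprime_dvd_left hdm_n (Nat.Coprime.coprime_dvd_right hdm1_m hc)
    have hip : IsCoprime ((d m : ℤ)) ((d (m-1) : ℤ)) := by
      rw [Int.isCoprime_iff_gcd_eq_one]
      simpa [Int.gcd] using hcopN
    have hED : ((d m * d (m-1) : ℕ) : ℤ) ∣ D := by
      push_cast
      exact hip.mul_dvd hdmD hdm1D
    have hprimes : ∀ r, r.Prime → r ∣ D.natAbs → r ∣ d m * d (m-1) := by
      intro r hrp hrd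
      have hrD : (r:ℤ) ∣ D := by
        rw [← habs]
        exact_mod_cast Int.natCast_dvd_natCast.mpr hrd
      rcases (key r hrp hrD).1 with ⟨h1, hpp⟩ | ⟨h1, hpp⟩ | ⟨_, hm3⟩
      · have hr : r ∣ d m := by
          rw [hd m]
          apply Finset.dvd_gcd
          intro i hi
          rw [Finset.mem_Icc] at hi
          rw [hpp]
          apply hrp.dvd_choose_pow (by omega)
          intro h
          rw [← hpp] at h
          omega
        exact Dvd.dvd.mul_right hr _
      · have hr : r ∣ d (m-1) := by
          rw [hdd1]
          apply Finset.dvd_gcd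
          intro i hi
          rw [Finset.mem_Icc] at hi
          rw [hpp]
          apply hrp.dvd_choose_pow (by omega)
          intro h
          rw [← hpp] at h
          omega
        exact Dvd.dvd.mul_left hr _
      · exact absurd hm3 hnm
    have hres := hfinal (d m * d (m-1)) (Nat.mul_ne_zero hdm0 hdm10) hED hprimes
    rw [hres]
    push_cast
    ring
  · -- Mersenne
    rintro ⟨k, hk3, hkm⟩
    have h8 : 8 ≤ 2^k := by
      calc (8:ℕ) = 2^3 := by norm_num
      _ ≤ 2^k := Nat.pow_le_pow_right (by norm_num) hk3
    have hn2k : m + 1 = 2^k - 1 := by omega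
    have hoddall : ∀ i, i ≤ m - 1 → ¬ 2 ∣ (m+1).choose i := by
      intro i hi hdd
      have h0 : (((m+1).choose i : ZMod 2)) = 0 :=
        (ZMod.natCast_eq_zero_iff _ _).mpr hdd
      rw [hn2k] at h0
      exact choose_pow_sub_one_ne Nat.prime_two k i (by omega) h0
    have h2D : (2:ℤ) ∣ D := by
      rw [hD]
      apply Finset.dvd_gcd
      intro i hi
      rw [Finset.mem_Icc] at hi
      have o1 := hoddall i (by omega)
      have o2 := hoddall (i-1) (by omega)
      obtain ⟨a, ha⟩ : ∃ a, (m+1).choose i = 2*a+1 := ⟨((m+1).choose i)/2, by omega⟩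
      obtain ⟨b, hb⟩ : ∃ b, (m+1).choose (i-1) = 2*b+1 := ⟨((m+1).choose (i-1))/2, by omega⟩
      have ha' : ((m+1).choose i : ℤ) = 2*(a:ℤ)+1 := by exact_mod_cast ha
      have hb' : ((m+1).choose (i-1) : ℤ) = 2*(b:ℤ)+1 := by exact_mod_cast hb
      refine ⟨(a:ℤ) - (b:ℤ), ?_⟩
      rw [ha', hb']
      ring
    have hoddd : ¬ 2 ∣ d m := by
      intro h
      have h2 := h.trans hdm_n
      have : 2 ∣ 2^k := dvd_pow_self 2 (by omega)
      omega
    have hcop2 : IsCoprime (2:ℤ) ((d m : ℤ)) := by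
      rw [Int.isCoprime_iff_gcd_eq_one]
      have h := (Nat.Prime.coprime_iff_not_dvd Nat.prime_two).mpr hoddd
      simpa [Int.gcd] using h
    have hED : ((2 * d m : ℕ) : ℤ) ∣ D := by
      push_cast
      exact hcop2.mul_dvd h2D hdmD
    have hprimes : ∀ r, r.Prime → r ∣ D.natAbs → r ∣ 2 * d m := by
      intro r hrp hrd
      have hrD : (r:ℤ) ∣ D := by
        rw [← habs]
        exact_mod_cast Int.natCast_dvd_natCast.mpr hrd
      rcases (key r hrp hrD).1 with ⟨h1, hpp⟩ | ⟨h1, hpp⟩ | ⟨hr2, _⟩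
      · have hr : r ∣ d m := by
          rw [hd m]
          apply Finset.dvd_gcd
          intro i hi
          rw [Finset.mem_Icc] at hi
          rw [hpp]
          apply hrp.dvd_choose_pow (by omega)
          intro h
          rw [← hpp] at h
          omega
        exact Dvd.dvd.mul_left hr 2
      · exfalso
        by_cases hre : r = 2
        · subst hre
          set b := m.factorization 2 with hbdef
          have hb3 : 3 ≤ b := by
            by_contra hlt
            have hb2 : 2^b ≤ 2^2 := Nat.pow_le_pow_right (by norm_num) (by omega)
            omega
          have h4m : (4:ℕ) ∣ m := by
            rw [hpp, show (4:ℕ) = 2^2 by norm_num]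
            exact pow_dvd_pow 2 (by omega)
          have h4k : (4:ℕ) ∣ 2^k := by
            rw [show (4:ℕ) = 2^2 by norm_num]
            exact pow_dvd_pow 2 (by omega)
          omega
        · have hodd : Odd (r ^ m.factorization r) := (hrp.odd_of_ne_two hre).pow
          rw [← hpp] at hodd
          obtain ⟨j, hj⟩ := hodd
          have h2k : 2 ∣ 2^k := dvd_pow_self 2 (by omega)
          omega
      · rw [hr2]
        exact Dvd.dvd.mul_right (dvd_refl 2) _
    have hres := hfinal (2 * d m) (by omega) hED hprimes
    rw [hres]
    push_cast
    ring
end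

section
/- Let p be an odd prime and l ≥ 2, s ≥ 1 integers with 2^l = p^s − 1. Then either 2^l = 8 (i.e., p = 3, s = 2), or s = 1 and l is a power of 2 (so that 2^l + 1 is a Fermat prime). -/
/-- If `p` is an odd prime, `l ≥ 2`, `s ≥ 1` and `2^l = p^s − 1`, then either
`2^l = 8` (i.e. `p = 3`, `s = 2`), or `s = 1` and `l` is a power of `2`. -/
theorem stmt_5 (p l s : ℕ) (hp : p.Prime) (hodd : Odd p) (hl : 2 ≤ l) (hs : 1 ≤ s)
    (h : 2 ^ l = p ^ s - 1) :
    (2 ^ l = 8 ∧ p = 3 ∧ s = 2) ∨ (s = 1 ∧ ∃ n : ℕ, l = 2 ^ n) := by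
  have hp2 : 3 ≤ p := by
    rcases hodd with ⟨k, rfl⟩
    have := hp.two_le
    omega
  rcases Nat.even_or_odd s with hse | hso
  · -- s even : s = 2*t
    left
    obtain ⟨t, rfl⟩ := hse
    have ht : 1 ≤ t := by omega
    obtain ⟨q, hq⟩ : ∃ q, q = p ^ t := ⟨_, rfl⟩
    have hq3 : 3 ≤ q := by
      calc 3 ≤ p := hp2
      _ = p ^ 1 := (pow_one p).symm
      _ ≤ p ^ t := Nat.pow_le_pow_right (by omega) ht
      _ = q := hq.symm
    have hqodd : Odd q := hq ▸ hodd.pow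
    have hfac : 2 ^ l = (q - 1) * (q + 1) := by
      have hqq : p ^ (t + t) = q * q := by rw [hq, ← pow_add]
      rw [h, hqq]
      obtain ⟨r, hr⟩ := Nat.exists_eq_add_of_le (show 1 ≤ q by omega)
      subst hr
      have e1 : (1 + r) * (1 + r) = r * r + 2 * r + 1 := by ring
      have e2 : (1 + r - 1) * (1 + r + 1) = r * r + 2 * r := by
        have : 1 + r - 1 = r := by omega
        rw [this]; ring
      omega
    have hd1 : q - 1 ∣ 2 ^ l := ⟨q + 1, hfac⟩
    have hd2 : q + 1 ∣ 2 ^ l := ⟨q - 1, by rw [hfac]; ring⟩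
    obtain ⟨a, ha, hqa⟩ := (Nat.dvd_prime_pow Nat.prime_two).mp hd1
    obtain ⟨b, hb, hqb⟩ := (Nat.dvd_prime_pow Nat.prime_two).mp hd2
    have hab : 2 ^ b = 2 ^ a + 2 := by omega
    have haltb : a < b := by
      have : 2 ^ a < 2 ^ b := by omega
      exact (Nat.pow_lt_pow_iff_right (by norm_num)).mp this
    have hdab : 2 ^ a ∣ 2 ^ b := Nat.pow_dvd_pow 2 haltb.le
    have h2a : (2 : ℕ) ^ a ∣ 2 := (Nat.dvd_add_right dvd_rfl).mp (hab ▸ hdab)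
    have ha1 : a ≤ 1 := by
      by_contra hc
      have : 4 ≤ 2 ^ a := by
        calc (4 : ℕ) = 2 ^ 2 := rfl
        _ ≤ 2 ^ a := Nat.pow_le_pow_right (by norm_num) (by omega)
      have h2 := Nat.le_of_dvd (by norm_num) h2a
      omega
    have ha1' : a = 1 := by
      have h2q : 2 ≤ 2 ^ a := by omega
      have hane : a ≠ 0 := by rintro rfl; simp at h2q
      omega
    have hq3' : q = 3 := by
      have : (2:ℕ) ^ a = 2 := by rw [ha1', pow_one]
      omega
    have hp3 : p = 3 := by
      have hd3 : p ∣ q := by rw [hq]; exact dvd_pow_self p (by omega)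
      rw [hq3'] at hd3
      exact (Nat.prime_dvd_prime_iff_eq hp Nat.prime_three).mp hd3
    have ht1 : t = 1 := by
      have hq3t : q = 3 ^ t := by rw [hq, hp3]
      have h3t : 3 ^ t = 3 ^ 1 := by rw [← hq3t, hq3', pow_one]
      exact Nat.pow_right_injective (by norm_num) h3t
    refine ⟨?_, hp3, by omega⟩
    rw [h, hp3, ht1]
    norm_num
  · -- s odd
    right
    have hfac : (∑ i ∈ Finset.range s, p ^ i) * (p - 1) = p ^ s - 1 :=
      geom_sum_mul_of_one_le (by omega) s
    have hd : (∑ i ∈ Finset.range s, p ^ i) ∣ 2 ^ l := by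
      rw [h, ← hfac]; exact Dvd.intro _ rfl
    have hSodd : Odd (∑ i ∈ Finset.range s, p ^ i) := by
      rw [Nat.odd_iff]
      have : ∀ i ∈ Finset.range s, p ^ i % 2 = 1 := by
        intro i _
        rw [← Nat.odd_iff]
        exact hodd.pow
      rw [Finset.sum_nat_mod, Finset.sum_congr rfl this]
      simp [Nat.odd_iff.mp hso]
    obtain ⟨c, hc, hScEq⟩ := (Nat.dvd_prime_pow Nat.prime_two).mp hd
    have hc0 : c = 0 := by
      by_contra hc0
      have hdvd : 2 ∣ ∑ i ∈ Finset.range s, p ^ i := by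
        rw [hScEq]; exact dvd_pow_self 2 hc0
      have := Nat.odd_iff.mp hSodd
      omega
    have hS1 : (∑ i ∈ Finset.range s, p ^ i) = 1 := by rw [hScEq, hc0, pow_zero]
    have hs1 : s = 1 := by
      by_contra hs1
      have h2s : 2 ≤ s := by omega
      have : 1 + p ≤ ∑ i ∈ Finset.range s, p ^ i := by
        calc 1 + p = ∑ i ∈ Finset.range 2, p ^ i := by
              simp [Finset.sum_range_succ]
        _ ≤ _ := Finset.sum_le_sum_of_subset (Finset.range_subset_range.mpr h2s)
      omega
    refine ⟨hs1, ?_⟩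
    have hprime : (2 ^ l + 1).Prime := by
      have : 2 ^ l + 1 = p := by
        rw [h, hs1, pow_one]; omega
      rw [this]; exact hp
    exact Nat.pow_of_pow_add_prime (by norm_num) (by omega) hprime
end
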